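/- arXiv:1412.5430 — 5 statements merged into one kernel-verified Lean document; each statement's English description precedes it below -/
import Mathlib

section
/- Let K ⊆ ℝ³ be a compact convex set with nonempty interior which is strictly convex, let u ∈ ℝ³ be nonzero and c ∈ ℝ, and suppose the hyperplane {y ∈ ℝ³ : ⟪y, u⟫ = c} meets the interior of K. Then the set {y ∈ frontier K : ⟪y, u⟫ = c}, with the subspace topology, is homeomorphic to the unit circle {z ∈ ℝ² : ‖z‖ = 1}. -/
open scoped RealInnerProductSpace

open Set Metric Module

/-- For a strictly convex body `K ⊆ ℝ³` and a plane
`{y | ⟪y, u⟫ = c}` meeting the interior of `K`, the set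
`{y ∈ frontier K | ⟪y, u⟫ = c}` (a `K`-circle) is homeomorphic to the unit circle. -/
theorem kCircle_homeomorph_circle
    (K : Set (EuclideanSpace ℝ (Fin 3)))
    (hKcomp : IsCompact K) (hKconv : Convex ℝ K)
    (hKint : (interior K).Nonempty) (hKstrict : StrictConvex ℝ K)
    (u : EuclideanSpace ℝ (Fin 3)) (hu : u ≠ 0) (c : ℝ)
    (hmeet : ({y : EuclideanSpace ℝ (Fin 3) | ⟪y, u⟫ = c} ∩ interior K).Nonempty) :
    Nonempty
      (({y ∈ frontier K | ⟪y, u⟫ = c} : Set (EuclideanSpace ℝ (Fin 3))) ≃ₜ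
        {z : EuclideanSpace ℝ (Fin 2) | ‖z‖ = 1}) := by
  classical
  obtain ⟨p₀, hp₀c, hp₀int⟩ := hmeet
  have hp₀c : ⟪p₀, u⟫ = c := hp₀c
  set W : Submodule ℝ (EuclideanSpace ℝ (Fin 3)) := (ℝ ∙ u)ᗮ with hW
  have hWrank : finrank ℝ W = 2 := by
    have h1 : finrank ℝ (ℝ ∙ u) + finrank ℝ W = finrank ℝ (EuclideanSpace ℝ (Fin 3)) :=
      Submodule.finrank_add_finrank_orthogonal _
    rw [finrank_span_singleton hu, finrank_euclideanSpace_fin] at h1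
    omega
  -- a (continuous) linear equivalence from ℝ² to W
  have hfr : finrank ℝ (EuclideanSpace ℝ (Fin 2)) = finrank ℝ W := by
    rw [hWrank, finrank_euclideanSpace_fin]
  let L : EuclideanSpace ℝ (Fin 2) ≃L[ℝ] W :=
    (LinearEquiv.ofFinrankEq _ _ hfr).toContinuousLinearEquiv
  -- the affine parametrization of the plane
  set f : EuclideanSpace ℝ (Fin 2) → EuclideanSpace ℝ (Fin 3) :=
    fun z => p₀ + ((L z : W) : EuclideanSpace ℝ (Fin 3)) with hf
  have hfc : Continuous f := continuous_const.add (continuous_subtype_val.comp L.continuous)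
  have hfinj : Function.Injective f := by
    intro z₁ z₂ h
    have h' : ((L z₁ : W) : EuclideanSpace ℝ (Fin 3)) = (L z₂ : W) := by
      simpa [hf] using h
    exact L.injective (Subtype.ext h')
  have hfplane : ∀ z, ⟪f z, u⟫ = c := by
    intro z
    have h0 : ⟪u, ((L z : W) : EuclideanSpace ℝ (Fin 3))⟫ = 0 :=
      Submodule.mem_orthogonal_singleton_iff_inner_right.mp (L z).2
    have : ⟪((L z : W) : EuclideanSpace ℝ (Fin 3)), u⟫ = 0 := by
      rwa [real_inner_comm]
    simp [hf, inner_add_left, hp₀c, this]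
  have hfsurj : ∀ y : EuclideanSpace ℝ (Fin 3), ⟪y, u⟫ = c → ∃ z, f z = y := by
    intro y hy
    have hmem : y - p₀ ∈ W := by
      rw [hW, Submodule.mem_orthogonal_singleton_iff_inner_right, inner_sub_right]
      have h1 : ⟪u, y⟫ = c := by rw [real_inner_comm]; exact hy
      have h2 : ⟪u, p₀⟫ = c := by rw [real_inner_comm]; exact hp₀c
      rw [h1, h2, sub_self]
    refine ⟨L.symm ⟨y - p₀, hmem⟩, ?_⟩
    simp [hf]
  -- affine combinations
  have hfcomb : ∀ (a b : ℝ) (x y : EuclideanSpace ℝ (Fin 2)), a + b = 1 →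
      f (a • x + b • y) = a • f x + b • f y := by
    intro a b x y hab
    have hp : a • p₀ + b • p₀ = p₀ := by rw [← add_smul, hab, one_smul]
    simp only [hf, map_add, map_smul, Submodule.coe_add, Submodule.coe_smul, smul_add]
    match_scalars <;> linarith
  set S : Set (EuclideanSpace ℝ (Fin 2)) := f ⁻¹' K with hS
  have hSconv : Convex ℝ S := by
    intro x hx y hy a b ha hb hab
    have := hfcomb a b x y hab
    simp only [hS, mem_preimage] at hx hy ⊢
    rw [this]
    exact hKconv hx hy ha hb hab
  have hSclosed : IsClosed S := hKcomp.isClosed.preimage hfc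
  -- interior S = f ⁻¹' interior K
  have hintS : interior S = f ⁻¹' interior K := by
    apply Subset.antisymm
    · intro z hz
      rcases Metric.isOpen_iff.mp isOpen_interior z hz with ⟨ε, hε, hball⟩
      set t : ℝ := ε / (2 * (‖z‖ + 1)) with ht
      have hzpos : (0:ℝ) < ‖z‖ + 1 := by positivity
      have htpos : 0 < t := by positivity
      have hz' : (1 + t) • z ∈ S := by
        apply interior_subset; apply hball
        rw [mem_ball_iff_norm]
        have : (1 + t) • z - z = t • z := by
          rw [add_smul, one_smul]; abel
        rw [this, norm_smul, Real.norm_eq_abs, abs_of_pos htpos]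
        calc t * ‖z‖ ≤ t * (‖z‖ + 1) := by nlinarith
          _ = ε / 2 := by rw [ht]; field_simp
          _ < ε := by linarith
      -- f z is a convex combination of p₀ ∈ interior K and f ((1+t)•z) ∈ K
      have h1t : (0:ℝ) < 1 + t := by linarith
      have hcombo : f z = (t / (1 + t)) • f 0 + (1 / (1 + t)) • f ((1 + t) • z) := by
        rw [← hfcomb (t / (1 + t)) (1 / (1 + t)) 0 ((1 + t) • z) (by field_simp; ring)]
        congr 1
        rw [smul_zero, zero_add, smul_smul]
        field_simp
        rw [one_smul]
      have hf0 : f 0 = p₀ := by simp [hf]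
      have : f z ∈ interior K := by
        rw [hcombo, hf0]
        exact hKconv.combo_interior_self_mem_interior hp₀int hz'
          (by positivity) (by positivity) (by field_simp; ring)
      exact this
    · intro z hz
      have hopen : IsOpen (f ⁻¹' interior K) := isOpen_interior.preimage hfc
      exact interior_maximal (preimage_mono interior_subset) hopen hz
  have hfrS : frontier S = f ⁻¹' frontier K := by
    rw [hSclosed.frontier_eq, hintS, hKcomp.isClosed.frontier_eq]
    rfl
  -- S is bounded
  have hSbdd : Bornology.IsBounded S := by
    set G : EuclideanSpace ℝ (Fin 3) → EuclideanSpace ℝ (Fin 2) :=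
      fun y => L.symm (W.orthogonalProjectionOnto (y - p₀)) with hG
    have hGcont : Continuous G := by
      apply L.symm.continuous.comp
      exact (W.orthogonalProjectionOnto).continuous.comp (continuous_id.sub continuous_const)
    have hsub : S ⊆ G '' K := by
      intro z hz
      refine ⟨f z, hz, ?_⟩
      have h1 : f z - p₀ = ((L z : W) : EuclideanSpace ℝ (Fin 3)) := by simp [hf]
      have h2 : W.orthogonalProjectionOnto (((L z : W) : EuclideanSpace ℝ (Fin 3))) = L z :=
        Submodule.orthogonalProjectionOnto_mem_subspace_eq_self (L z)
      rw [hG]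
      simp only [h1, h2, ContinuousLinearEquiv.symm_apply_apply]
    exact ((hKcomp.image hGcont).isBounded).subset hsub
  have hSintne : (interior S).Nonempty := by
    refine ⟨0, ?_⟩
    rw [hintS]
    simpa [hf] using hp₀int
  -- get the homeomorphism sending frontier S to the unit sphere
  obtain ⟨h, -, -, hhfr⟩ :=
    exists_homeomorph_image_interior_closure_frontier_eq_unitBall hSconv hSintne hSbdd
  -- frontier S is compact
  have hfrScomp : IsCompact (frontier S) := by
    apply Metric.isCompact_of_isClosed_isBounded isClosed_frontier
    exact hSbdd.subset (by rw [hSclosed.frontier_eq]; exact diff_subset)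
  -- homeomorphism from frontier S to the K-circle
  set C : Set (EuclideanSpace ℝ (Fin 3)) := {y ∈ frontier K | ⟪y, u⟫ = c} with hC
  have hmaps : ∀ z : frontier S, f z ∈ C := by
    rintro ⟨z, hz⟩
    rw [hfrS] at hz
    exact ⟨hz, hfplane z⟩
  let F : frontier S → C := fun z => ⟨f z, hmaps z⟩
  have hFbij : Function.Bijective F := by
    constructor
    · rintro ⟨z₁, h₁⟩ ⟨z₂, h₂⟩ h
      have : f z₁ = f z₂ := congrArg Subtype.val h
      exact Subtype.ext (hfinj this)
    · rintro ⟨y, hyfr, hyc⟩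
      obtain ⟨z, hz⟩ := hfsurj y hyc
      have hzfr : z ∈ frontier S := by rw [hfrS]; simpa [hz] using hyfr
      exact ⟨⟨z, hzfr⟩, Subtype.ext hz⟩
  have hFcont : Continuous F := Continuous.subtype_mk (hfc.comp continuous_subtype_val) _
  have e₁ : (frontier S : Set (EuclideanSpace ℝ (Fin 2))) ≃ₜ C := by
    haveI : CompactSpace (frontier S) := isCompact_iff_compactSpace.mp hfrScomp
    exact (Continuous.homeoOfEquivCompactToT2 (f := Equiv.ofBijective F hFbij) hFcont)
  -- frontier S ≃ₜ sphere 0 1 ≃ₜ {z | ‖z‖ = 1}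
  have hsph : h '' frontier S = {z : EuclideanSpace ℝ (Fin 2) | ‖z‖ = 1} := by
    rw [hhfr]
    ext z
    simp [mem_sphere_zero_iff_norm]
  exact ⟨e₁.symm.trans ((h.image (frontier S)).trans (Homeomorph.setCongr hsph))⟩
end

section
/- Let K ⊆ ℝ³ be a compact convex set with nonempty interior which is strictly convex and has smooth boundary in the sense that for every p ∈ frontier K there is exactly one unit vector u ∈ ℝ³ with ⟪y − p, u⟫ ≤ 0 for all y ∈ K. For i = 1, 2, 3 let Hᵢ = {y ∈ ℝ³ : ⟪y, uᵢ⟫ ≥ cᵢ} be closed half-spaces (uᵢ ≠ 0) whose bounding hyperplanes {y : ⟪y, uᵢ⟫ = cᵢ} meet the interior of K, and set Dᵢ = Hᵢ ∩ frontier K. If the three open pieces {y ∈ frontier K : ⟪y, uᵢ⟫ > cᵢ}, i = 1, 2, 3, are pairwise disjoint, then D₁ ∩ D₂ ∩ D₃ = ∅. -/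
open scoped RealInnerProductSpace
open Set Metric Filter

local notation "E3" => EuclideanSpace ℝ (Fin 3)

/-- interior points are strictly on the negative side of a supporting hyperplane -/
lemma aux_interior_strict {K : Set E3} {p n z : E3} (hz : z ∈ interior K)
    (hn1 : ‖n‖ = 1) (hn : ∀ y ∈ K, ⟪y - p, n⟫ ≤ 0) : ⟪z - p, n⟫ < 0 := by
  obtain ⟨r, hr, hball⟩ := Metric.isOpen_iff.mp isOpen_interior z hz
  have hmem : z + (r/2) • n ∈ K := by
    apply interior_subset (hball ?_)
    simp only [mem_ball, dist_eq_norm, add_sub_cancel_left, norm_smul, Real.norm_eq_abs, hn1,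
      mul_one, abs_of_pos (by linarith : (0:ℝ) < r/2)]
    linarith
  have h1 := hn _ hmem
  have h2 : ⟪z + (r/2) • n - p, n⟫ = ⟪z - p, n⟫ + (r/2) * ‖n‖^2 := by
    rw [add_sub_right_comm, inner_add_left, real_inner_smul_left,
      real_inner_self_eq_norm_sq]
  rw [h2, hn1] at h1
  nlinarith

/-- strict convexity: support plane touches only at `p` -/
lemma aux_touch {K : Set E3} (hKcl : IsClosed K) (hKstrict : StrictConvex ℝ K)
    {p n y : E3} (hp : p ∈ frontier K) (hn1 : ‖n‖ = 1)
    (hn : ∀ y ∈ K, ⟪y - p, n⟫ ≤ 0) (hy : y ∈ K) (h0 : ⟪y - p, n⟫ = 0) : y = p := by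
  by_contra hne
  have hpK : p ∈ K := hKcl.frontier_subset hp
  have hmid : (2⁻¹:ℝ) • y + (2⁻¹:ℝ) • p ∈ interior K :=
    hKstrict hy hpK hne (by norm_num) (by norm_num) (by norm_num)
  have := aux_interior_strict hmid hn1 hn
  have he : ⟪(2⁻¹:ℝ) • y + (2⁻¹:ℝ) • p - p, n⟫ = (2⁻¹:ℝ) * ⟪y - p, n⟫ := by
    have : (2⁻¹:ℝ) • y + (2⁻¹:ℝ) • p - p = (2⁻¹:ℝ) • (y - p) := by
      rw [smul_sub]; module
    rw [this, real_inner_smul_left]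
  rw [he, h0] at this
  norm_num at this

/-- segment from a point of `K` to a point outside meets the frontier  -/
lemma aux_seg_frontier {K : Set E3} (hKcl : IsClosed K) {z q : E3}
    (hz : z ∈ K) (hq : q ∉ K) :
    ∃ t : ℝ, t ∈ Set.Ico (0:ℝ) 1 ∧ z + t • (q - z) ∈ frontier K := by
  set f : ℝ → E3 := fun t => z + t • (q - z) with hf
  have hfc : Continuous f := by fun_prop
  set S := {t : ℝ | t ∈ Set.Icc (0:ℝ) 1 ∧ f t ∈ K} with hS
  have hS0 : (0:ℝ) ∈ S := by simp [hS, hf, hz]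
  have hSbdd : BddAbove S := ⟨1, fun t ht => ht.1.2⟩
  have hScl : IsClosed S := by
    have : S = Set.Icc (0:ℝ) 1 ∩ f ⁻¹' K := rfl
    rw [this]; exact isClosed_Icc.inter (hKcl.preimage hfc)
  set τ := sSup S with hτ
  have hτS : τ ∈ S := hScl.csSup_mem ⟨0, hS0⟩ hSbdd
  have hτ1 : τ ≠ 1 := by
    intro h
    apply hq
    have := hτS.2
    rw [h] at this
    simpa [hf] using this
  have hτle : τ ≤ 1 := hτS.1.2
  have hτlt : τ < 1 := lt_of_le_of_ne hτle hτ1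
  refine ⟨τ, ⟨hτS.1.1, hτlt⟩, ?_⟩
  rw [hKcl.frontier_eq]
  refine ⟨hτS.2, fun hint => ?_⟩
  obtain ⟨ε, hε, hball⟩ := Metric.isOpen_iff.mp (isOpen_interior.preimage hfc) τ hint
  set t' := min 1 (τ + min (ε/2) ((1-τ)/2)) with ht'
  have hτt' : τ < t' := by
    apply lt_min (by linarith)
    have : 0 < min (ε/2) ((1-τ)/2) := lt_min (by linarith) (by linarith)
    linarith
  have ht'S : t' ∈ S := by
    constructor
    · exact ⟨le_trans hτS.1.1 hτt'.le, min_le_left _ _⟩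
    · refine interior_subset (hball ?_)
      simp only [mem_ball, Real.dist_eq]
      have h1 : t' ≤ τ + min (ε/2) ((1-τ)/2) := min_le_right _ _
      have h2 : min (ε/2) ((1-τ)/2) ≤ ε/2 := min_le_left _ _
      rw [abs_of_pos (by linarith)]
      linarith
  exact absurd (le_csSup hSbdd ht'S) (not_le.mpr hτt')

lemma aux_approx_normal {K : Set E3} (hKcl : IsClosed K)
    (hsmooth : ∀ p ∈ frontier K,
      ∃! u : E3, ‖u‖ = 1 ∧ ∀ y ∈ K, ⟪y - p, u⟫ ≤ 0)
    {p n : E3} (hp : p ∈ frontier K) (hn1 : ‖n‖ = 1)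
    (hn : ∀ y ∈ K, ⟪y - p, n⟫ ≤ 0) {δ : ℝ} (hδ : 0 < δ) :
    ∃ ε > 0, ∀ y ∈ frontier K, ‖y - p‖ < ε → -δ * ‖y - p‖ ≤ ⟪y - p, n⟫ := by
  by_contra hcon
  push_neg at hcon
  choose y hyf hyc hylt using fun k : ℕ => hcon (1/(k+1)) (by positivity)
  have hpK : p ∈ K := hKcl.frontier_subset hp
  have hypos : ∀ k, 0 < ‖y k - p‖ := by
    intro k
    rcases eq_or_lt_of_le (norm_nonneg (y k - p)) with h | h
    · exfalso
      have h0 : y k - p = 0 := by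
        have := h.symm; rwa [norm_eq_zero] at this
      have := hylt k
      rw [h0] at this
      simp at this
    · exact h
  set d : ℕ → E3 := fun k => ‖y k - p‖⁻¹ • (y k - p) with hd
  have hdsph : ∀ k, d k ∈ Metric.sphere (0:E3) 1 := by
    intro k
    rw [mem_sphere_zero_iff_norm, hd]
    simp only [norm_smul, Real.norm_eq_abs, abs_of_pos (inv_pos.mpr (hypos k))]
    rw [inv_mul_eq_div, div_self (hypos k).ne']
  choose m hm1 hmsupp using fun k : ℕ => (hsmooth (y k) (hyf k)).exists
  have hmsph : ∀ k, m k ∈ Metric.sphere (0:E3) 1 := fun k =>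
    mem_sphere_zero_iff_norm.mpr (hm1 k)
  obtain ⟨⟨d0, m0⟩, hmem0, φ, hφ, hlim⟩ :=
    ((isCompact_sphere (0:E3) 1).prod (isCompact_sphere (0:E3) 1)).tendsto_subseq
      (x := fun k => (d k, m k)) (fun k => ⟨hdsph k, hmsph k⟩)
  have hdlim : Tendsto (fun k => d (φ k)) atTop (nhds d0) :=
    (continuous_fst.tendsto _).comp hlim
  have hmlim : Tendsto (fun k => m (φ k)) atTop (nhds m0) :=
    (continuous_snd.tendsto _).comp hlim
  -- y (φ k) → p
  have hnormlim : Tendsto (fun k => ‖y (φ k) - p‖) atTop (nhds 0) := by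
    apply squeeze_zero (fun k => norm_nonneg _) (fun k => (hyc (φ k)).le)
    apply squeeze_zero (fun k => by positivity)
      (g := fun k : ℕ => 1/(k+1:ℝ)) (fun k => ?_) tendsto_one_div_add_atTop_nhds_zero_nat
    have hk : (k:ℝ) ≤ φ k := by exact_mod_cast hφ.le_apply (x := k)
    apply one_div_le_one_div_of_le (by positivity)
    linarith
  have hylim : Tendsto (fun k => y (φ k)) atTop (nhds p) := by
    rw [tendsto_iff_norm_sub_tendsto_zero]
    exact hnormlim
  -- m0 is a unit outer normal at p
  have hm01 : ‖m0‖ = 1 := mem_sphere_zero_iff_norm.mp hmem0.2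
  have hm0supp : ∀ x ∈ K, ⟪x - p, m0⟫ ≤ 0 := by
    intro x hx
    have hlim2 : Tendsto (fun k => ⟪x - y (φ k), m (φ k)⟫) atTop (nhds ⟪x - p, m0⟫) :=
      ((tendsto_const_nhds.sub hylim).inner hmlim)
    exact le_of_tendsto hlim2 (Filter.Eventually.of_forall fun k => hmsupp (φ k) x hx)
  have hm0n : m0 = n := (hsmooth p hp).unique ⟨hm01, hm0supp⟩ ⟨hn1, hn⟩
  -- 0 ≤ ⟪d0, m0⟫
  have h1 : 0 ≤ ⟪d0, m0⟫ := by
    have hlim3 : Tendsto (fun k => ⟪d (φ k), m (φ k)⟫) atTop (nhds ⟪d0, m0⟫) :=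
      hdlim.inner hmlim
    refine ge_of_tendsto hlim3 (Filter.Eventually.of_forall fun k => ?_)
    have hsup := hmsupp (φ k) p hpK
    have : 0 ≤ ⟪y (φ k) - p, m (φ k)⟫ := by
      have : ⟪p - y (φ k), m (φ k)⟫ = -⟪y (φ k) - p, m (φ k)⟫ := by
        rw [← inner_neg_left]; congr 1; abel
      linarith [hsup, this ▸ hsup]
    rw [hd]
    simp only [real_inner_smul_left]
    positivity
  -- ⟪d0, n⟫ ≤ -δ
  have h2 : ⟪d0, n⟫ ≤ -δ := by
    have hlim4 : Tendsto (fun k => ⟪d (φ k), n⟫) atTop (nhds ⟪d0, n⟫) :=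
      hdlim.inner tendsto_const_nhds
    refine le_of_tendsto hlim4 (Filter.Eventually.of_forall fun k => ?_)
    have hk := hylt (φ k)
    have hpos := hypos (φ k)
    rw [hd]
    simp only [real_inner_smul_left]
    rw [inv_mul_le_iff₀ hpos]
    calc ⟪y (φ k) - p, n⟫ ≤ -δ * ‖y (φ k) - p‖ := hk.le
      _ = ‖y (φ k) - p‖ * -δ := by ring
  rw [hm0n] at h1
  linarith

set_option maxHeartbeats 1000000 in
lemma aux_cap_point {K : Set E3} (hKcomp : IsCompact K) (hKconv : Convex ℝ K)
    (hKstrict : StrictConvex ℝ K)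
    (hsmooth : ∀ p ∈ frontier K,
      ∃! u : E3, ‖u‖ = 1 ∧ ∀ y ∈ K, ⟪y - p, u⟫ ≤ 0)
    {p z n : E3} (hp : p ∈ frontier K) (hz : z ∈ interior K)
    (hn1 : ‖n‖ = 1) (hn : ∀ y ∈ K, ⟪y - p, n⟫ ≤ 0)
    {a b w : E3} (hwn : ⟪w, n⟫ = 0) (hwa : 0 < ⟪w, a⟫) (hwb : 0 < ⟪w, b⟫)
    {ε : ℝ} (hε : 0 < ε) :
    ∃ y ∈ frontier K, ‖y - p‖ < ε ∧ 0 < ⟪y - p, a⟫ ∧ 0 < ⟪y - p, b⟫ := by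
  have hKcl := hKcomp.isClosed
  have hpK : p ∈ K := hKcl.frontier_subset hp
  have hw0 : w ≠ 0 := by rintro rfl; simp at hwa
  have hwpos : 0 < ‖w‖ := norm_pos_iff.mpr hw0
  have ha0 : a ≠ 0 := by rintro rfl; simp at hwa
  have hb0 : b ≠ 0 := by rintro rfl; simp at hwb
  have hapos : 0 < ‖a‖ := norm_pos_iff.mpr ha0
  have hbpos : 0 < ‖b‖ := norm_pos_iff.mpr hb0
  have hγ : 0 < ⟪p - z, n⟫ := by
    have h1 := aux_interior_strict hz hn1 hn
    have h2 : ⟪p - z, n⟫ = -⟪z - p, n⟫ := by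
      rw [← inner_neg_left]; congr 1; abel
    linarith
  set γ := ⟪p - z, n⟫ with hγdef
  have hpzne : p - z ≠ 0 := by
    intro h; rw [hγdef, h] at hγ; simp at hγ
  have hpz : 0 < ‖p - z‖ := norm_pos_iff.mpr hpzne
  -- choose δ
  set δ := min (γ / (4*‖p-z‖)) (min (γ * ⟪w,a⟫ / (8*‖w‖*‖p-z‖*‖a‖))
    (γ * ⟪w,b⟫ / (8*‖w‖*‖p-z‖*‖b‖))) with hδdef
  have hδ : 0 < δ :=
    lt_min (by positivity) (lt_min (by positivity) (by positivity))
  obtain ⟨ε₁, hε₁, hL1⟩ := aux_approx_normal hKcl hsmooth hp hn1 hn hδ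
  set ε' := min ε ε₁ with hε'def
  have hε'pos : 0 < ε' := lt_min hε hε₁
  set η := min (1/2 : ℝ) (ε' / (2*‖p-z‖)) with hηdef
  have hηpos : 0 < η := lt_min (by norm_num) (by positivity)
  have hηle : η ≤ 1/2 := min_le_left _ _
  -- compact core inside the interior
  set C := (fun t : ℝ => z + t • (p - z)) '' Set.Icc 0 (1-η) with hCdef
  have hCcomp : IsCompact C := isCompact_Icc.image (by fun_prop)
  have hCsub : C ⊆ interior K := by
    rintro _ ⟨t, ⟨ht0, ht1⟩, rfl⟩
    have h1t : 0 < 1 - t := by linarith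
    show z + t • (p - z) ∈ interior K
    have heq : z + t • (p - z) = (1-t) • z + t • p := by
      rw [smul_sub]; module
    rw [heq]
    exact hKconv.combo_interior_closure_mem_interior hz (subset_closure hpK) h1t ht0
      (by ring)
  obtain ⟨ρ, hρ, hρsub⟩ := hCcomp.exists_thickening_subset_open isOpen_interior hCsub
  -- choose s
  set s := min (ρ / (2*‖w‖)) (ε' / (4*‖w‖)) with hsdef
  have hspos : 0 < s := lt_min (by positivity) (by positivity)
  have hsw1 : s * ‖w‖ < ρ := by
    have h1 : s ≤ ρ / (2*‖w‖) := min_le_left _ _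
    have h2 : s * ‖w‖ ≤ (ρ / (2*‖w‖)) * ‖w‖ := mul_le_mul_of_nonneg_right h1 (norm_nonneg w)
    have h3 : (ρ / (2*‖w‖)) * ‖w‖ = ρ/2 := by field_simp
    linarith
  have hsw2 : s * ‖w‖ ≤ ε'/4 := by
    have h1 : s ≤ ε' / (4*‖w‖) := min_le_right _ _
    calc s * ‖w‖ ≤ (ε' / (4*‖w‖)) * ‖w‖ := mul_le_mul_of_nonneg_right h1 (norm_nonneg w)
      _ = ε'/4 := by field_simp
  -- the point outside K
  set q := p + s • w with hqdef
  have hqK : q ∉ K := by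
    intro hqm
    have h0 : ⟪q - p, n⟫ = 0 := by
      rw [hqdef, add_sub_cancel_left, real_inner_smul_left, hwn, mul_zero]
    have hqp := aux_touch hKcl hKstrict hp hn1 hn hqm h0
    rw [hqdef] at hqp
    have : s • w = 0 := by
      have := congrArg (· - p) hqp
      simpa using this
    rcases smul_eq_zero.mp this with h | h
    · exact hspos.ne' h
    · exact hw0 h
  obtain ⟨t, ⟨ht0, ht1⟩, hyfr⟩ := aux_seg_frontier hKcl (interior_subset hz) hqK
  set y := z + t • (q - z) with hydef
  have hid : y - p = (t - 1) • (p - z) + (t*s) • w := by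
    rw [hydef, hqdef]; module
  -- t is close to 1
  have htlarge : 1 - η < t := by
    by_contra hle
    push_neg at hle
    have hyint : y ∈ interior K := by
      apply hρsub
      rw [Metric.mem_thickening_iff]
      refine ⟨z + t • (p - z), ⟨t, ⟨ht0, hle⟩, rfl⟩, ?_⟩
      rw [dist_eq_norm]
      have heq2 : y - (z + t • (p - z)) = (t*s) • w := by
        rw [hydef, hqdef]; module
      rw [heq2, norm_smul, Real.norm_eq_abs, abs_of_nonneg (by nlinarith : (0:ℝ) ≤ t*s)]
      calc t*s*‖w‖ ≤ s * ‖w‖ := by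
            nlinarith [mul_nonneg (mul_nonneg (by linarith : (0:ℝ) ≤ 1-t) hspos.le) (norm_nonneg w)]
        _ < ρ := hsw1
    have := hKcl.frontier_eq ▸ hyfr
    exact this.2 hyint
  have ht12 : (1/2 : ℝ) ≤ t := by
    have : 1 - η ≥ 1/2 := by linarith
    linarith
  -- norm bound
  have hnb : ‖y - p‖ ≤ (1-t) * ‖p - z‖ + s * ‖w‖ := by
    rw [hid]
    calc ‖(t-1) • (p-z) + (t*s) • w‖ ≤ ‖(t-1) • (p-z)‖ + ‖(t*s) • w‖ := norm_add_le _ _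
      _ = |t-1| * ‖p-z‖ + |t*s| * ‖w‖ := by
          rw [norm_smul, norm_smul, Real.norm_eq_abs, Real.norm_eq_abs]
      _ ≤ (1-t) * ‖p-z‖ + s * ‖w‖ := by
          rw [abs_of_nonpos (by linarith), abs_of_nonneg (by nlinarith)]
          have h5 : t*s*‖w‖ ≤ s*‖w‖ := by
            nlinarith [mul_nonneg (mul_nonneg (by linarith : (0:ℝ) ≤ 1-t) hspos.le) (norm_nonneg w)]
          linarith
  have hynear : ‖y - p‖ < ε' := by
    have h1 : (1-t) * ‖p-z‖ ≤ η * ‖p-z‖ :=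
      mul_le_mul_of_nonneg_right (by linarith) (norm_nonneg _)
    have h2 : η * ‖p-z‖ ≤ ε'/2 := by
      have h4 : η ≤ ε' / (2*‖p-z‖) := min_le_right _ _
      calc η * ‖p-z‖ ≤ (ε' / (2*‖p-z‖)) * ‖p-z‖ := mul_le_mul_of_nonneg_right h4 (norm_nonneg _)
        _ = ε'/2 := by field_simp
    have := hsw2
    linarith
  -- apply the approximate normal bound
  have hL := hL1 y hyfr (lt_of_lt_of_le hynear (min_le_right _ _))
  have hinner_n : ⟪y - p, n⟫ = (t - 1) * γ := by
    rw [hid, inner_add_left, real_inner_smul_left, real_inner_smul_left, hwn, hγdef]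
    ring
  have key : (1-t) * γ ≤ δ * ((1-t)*‖p-z‖ + s*‖w‖) := by
    rw [hinner_n] at hL
    have habs : ‖y - p‖ ≤ (1-t)*‖p-z‖ + s*‖w‖ := hnb
    nlinarith [norm_nonneg (y - p)]
  have hδpz : δ * ‖p-z‖ ≤ γ/4 := by
    have h1 : δ ≤ γ / (4*‖p-z‖) := min_le_left _ _
    calc δ * ‖p-z‖ ≤ (γ / (4*‖p-z‖)) * ‖p-z‖ := mul_le_mul_of_nonneg_right h1 (norm_nonneg _)
      _ = γ/4 := by field_simp
  have h34 : (3/4) * ((1-t)*γ) ≤ δ * (s*‖w‖) := by nlinarith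
  -- the main positivity estimate
  have final : ∀ v : E3, 0 < ⟪w, v⟫ →
      δ * (8*‖w‖*‖p-z‖*‖v‖) ≤ γ * ⟪w,v⟫ → 0 < ⟪y - p, v⟫ := by
    intro v hv h8
    have hvpos : 0 < ‖v‖ := by
      rcases eq_or_ne v 0 with rfl | hv0
      · simp at hv
      · exact norm_pos_iff.mpr hv0
    have h6 : 6 * ((1-t) * (‖p-z‖*‖v‖)) ≤ s * ⟪w,v⟫ := by
      nlinarith [mul_le_mul_of_nonneg_right h34 (by positivity : (0:ℝ) ≤ ‖p-z‖*‖v‖),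
        mul_le_mul_of_nonneg_right h8 hspos.le, mul_pos hspos hv]
    have hCS : ⟪p-z, v⟫ ≤ ‖p-z‖*‖v‖ := real_inner_le_norm _ _
    rw [hid, inner_add_left, real_inner_smul_left, real_inner_smul_left]
    nlinarith [mul_nonneg (by linarith : (0:ℝ) ≤ 1-t) (by linarith : 0 ≤ ‖p-z‖*‖v‖ - ⟪p-z,v⟫),
      mul_pos hspos hv]
  have h8a : δ * (8*‖w‖*‖p-z‖*‖a‖) ≤ γ * ⟪w,a⟫ := by
    have h1 : δ ≤ γ * ⟪w,a⟫ / (8*‖w‖*‖p-z‖*‖a‖) :=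
      le_trans (min_le_right _ _) (min_le_left _ _)
    rwa [le_div_iff₀ (by positivity)] at h1
  have h8b : δ * (8*‖w‖*‖p-z‖*‖b‖) ≤ γ * ⟪w,b⟫ := by
    have h1 : δ ≤ γ * ⟪w,b⟫ / (8*‖w‖*‖p-z‖*‖b‖) :=
      le_trans (min_le_right _ _) (min_le_right _ _)
    rwa [le_div_iff₀ (by positivity)] at h1
  exact ⟨y, hyfr, lt_of_lt_of_le hynear (min_le_left _ _), final a hwa h8a, final b hwb h8b⟩

lemma aux_pos_pair {a b : E3} (ha : a ≠ 0) (hb : b ≠ 0)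
    (hab : ‖b‖ • a ≠ ‖a‖ • (-b)) :
    0 < ⟪‖b‖ • a + ‖a‖ • b, a⟫ ∧ 0 < ⟪‖b‖ • a + ‖a‖ • b, b⟫ := by
  have hCS : ⟪a, -b⟫ ≤ ‖a‖ * ‖-b‖ := real_inner_le_norm _ _
  have hne : ⟪a, -b⟫ ≠ ‖a‖ * ‖-b‖ := by
    intro h
    exact hab (by simpa [norm_neg] using inner_eq_norm_mul_iff_real.mp h)
  have h1 : -(‖a‖ * ‖b‖) < ⟪a, b⟫ := by
    have h2 := lt_of_le_of_ne hCS hne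
    rw [inner_neg_right, norm_neg] at h2
    linarith
  have hna : 0 < ‖a‖ := norm_pos_iff.mpr ha
  have hnb : 0 < ‖b‖ := norm_pos_iff.mpr hb
  constructor
  · rw [inner_add_left, real_inner_smul_left, real_inner_smul_left,
      real_inner_self_eq_norm_sq, real_inner_comm]
    nlinarith
  · rw [inner_add_left, real_inner_smul_left, real_inner_smul_left,
      real_inner_self_eq_norm_sq]
    nlinarith

/-- For a smooth strictly convex body `K ⊆ ℝ³`, three `K`-disks
whose (relative) interiors are pairwise disjoint cannot have a common point. -/
theorem three_kDisks_disjoint_interiors_no_common_point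
    (K : Set (EuclideanSpace ℝ (Fin 3)))
    (hKcomp : IsCompact K) (hKconv : Convex ℝ K)
    (hKint : (interior K).Nonempty) (hKstrict : StrictConvex ℝ K)
    (hsmooth : ∀ p ∈ frontier K,
      ∃! u : EuclideanSpace ℝ (Fin 3), ‖u‖ = 1 ∧ ∀ y ∈ K, ⟪y - p, u⟫ ≤ 0)
    (u : Fin 3 → EuclideanSpace ℝ (Fin 3)) (c : Fin 3 → ℝ)
    (hu : ∀ i, u i ≠ 0)
    (hmeet : ∀ i, ({y : EuclideanSpace ℝ (Fin 3) | ⟪y, u i⟫ = c i} ∩ interior K).Nonempty)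
    (hdisj : Pairwise fun i j =>
      Disjoint {y ∈ frontier K | c i < ⟪y, u i⟫} {y ∈ frontier K | c j < ⟪y, u j⟫}) :
    ({y : EuclideanSpace ℝ (Fin 3) | c 0 ≤ ⟪y, u 0⟫} ∩ frontier K) ∩
      ({y : EuclideanSpace ℝ (Fin 3) | c 1 ≤ ⟪y, u 1⟫} ∩ frontier K) ∩
      ({y : EuclideanSpace ℝ (Fin 3) | c 2 ≤ ⟪y, u 2⟫} ∩ frontier K) = ∅ := by
  rw [Set.eq_empty_iff_forall_notMem]
  rintro p ⟨⟨⟨hp0, hpf⟩, hp1, -⟩, hp2, -⟩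
  simp only [Set.mem_setOf_eq] at hp0 hp1 hp2
  obtain ⟨n, ⟨hn1, hn⟩, -⟩ := hsmooth p hpf
  obtain ⟨z, hz⟩ := hKint
  have hKcl := hKcomp.isClosed
  have hple : ∀ i, c i ≤ ⟪p, u i⟫ := by
    intro i; fin_cases i <;> assumption
  -- tangential components of the normals u i
  set v : Fin 3 → E3 := fun i => u i - ⟪u i, n⟫ • n with hvdef
  have hvn : ∀ i, ⟪v i, n⟫ = 0 := by
    intro i
    simp only [hvdef, inner_sub_left, real_inner_smul_left, real_inner_self_eq_norm_sq, hn1]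
    ring
  have hwu : ∀ (w : E3) (i : Fin 3), ⟪w, n⟫ = 0 → ⟪w, u i⟫ = ⟪w, v i⟫ := by
    intro w i hw
    simp only [hvdef, inner_sub_right, real_inner_smul_right, hw, mul_zero, sub_zero]
  have hvu : ∀ i, ⟪v i, u i⟫ = ‖v i‖^2 := by
    intro i
    rw [hwu (v i) i (hvn i), real_inner_self_eq_norm_sq]
  have hvne : ∀ i, ⟪p, u i⟫ = c i → v i ≠ 0 := by
    intro i hieq hv0
    obtain ⟨zi, hzi_eq, hzi_int⟩ := hmeet i
    have h1 : ⟪zi - p, u i⟫ = 0 := by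
      rw [inner_sub_left, hzi_eq, hieq, sub_self]
    have h2 : u i = ⟪u i, n⟫ • n := by
      have := sub_eq_zero.mp hv0
      exact this
    have h3 : ⟪zi - p, n⟫ < 0 := aux_interior_strict hzi_int hn1 hn
    rw [h2, real_inner_smul_right] at h1
    rcases mul_eq_zero.mp h1 with h | h
    · exact hu i (by rw [h2, h, zero_smul])
    · exact h3.ne h
  have contra : ∀ i j, i ≠ j → ∀ y, y ∈ frontier K → c i < ⟪y, u i⟫ → c j < ⟪y, u j⟫ → False := by
    intro i j hij y hyf h1 h2
    exact Set.disjoint_left.mp (hdisj hij) ⟨hyf, h1⟩ ⟨hyf, h2⟩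
  -- a helper producing the contradiction from a good tangent direction for a pair
  have finish : ∀ i j, i ≠ j → ∀ w : E3, ⟪w, n⟫ = 0 → 0 < ⟪w, u i⟫ → 0 < ⟪w, u j⟫ →
      ⟪p, u i⟫ = c i → ⟪p, u j⟫ = c j → False := by
    intro i j hij w hwn hwi hwj hieq hjeq
    obtain ⟨y, hyf, -, hyi, hyj⟩ :=
      aux_cap_point hKcomp hKconv hKstrict hsmooth hpf hz hn1 hn hwn hwi hwj one_pos
    apply contra i j hij y hyf
    · have : ⟪y - p, u i⟫ = ⟪y, u i⟫ - ⟪p, u i⟫ := inner_sub_left _ _ _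
      rw [this, hieq] at hyi; linarith
    · have : ⟪y - p, u j⟫ = ⟪y, u j⟫ - ⟪p, u j⟫ := inner_sub_left _ _ _
      rw [this, hjeq] at hyj; linarith
  by_cases hstrict : ∃ i, c i < ⟪p, u i⟫
  · obtain ⟨i, hi⟩ := hstrict
    obtain ⟨j, hij, hjeq⟩ : ∃ j, i ≠ j ∧ ⟪p, u j⟫ = c j := by
      have pick : ∀ j, i ≠ j → ⟪p, u j⟫ = c j := by
        intro j hij
        by_contra h
        exact contra i j hij p hpf hi (lt_of_le_of_ne (hple j) (Ne.symm h))
      by_cases h0 : i = 0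
      · exact ⟨1, by simp [h0], pick 1 (by simp [h0])⟩
      · exact ⟨0, h0, pick 0 h0⟩
    have hopen : IsOpen {y : E3 | c i < ⟪y, u i⟫} := by
      have hcont : Continuous fun y : E3 => ⟪y, u i⟫ :=
        continuous_id.inner continuous_const
      exact isOpen_lt continuous_const hcont
    obtain ⟨ε₀, hε₀, hball⟩ := Metric.isOpen_iff.mp hopen p hi
    have hvj := hvne j hjeq
    have hwa : 0 < ⟪v j, u j⟫ := by
      rw [hvu j]
      exact pow_pos (norm_pos_iff.mpr hvj) 2
    obtain ⟨y, hyf, hynear, hya, -⟩ :=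
      aux_cap_point hKcomp hKconv hKstrict hsmooth hpf hz hn1 hn (hvn j) hwa hwa hε₀
    apply contra i j hij y hyf
    · have : y ∈ ball p ε₀ := by rwa [mem_ball, dist_eq_norm]
      exact hball this
    · have h5 : ⟪y - p, u j⟫ = ⟪y, u j⟫ - ⟪p, u j⟫ := inner_sub_left _ _ _
      rw [h5, hjeq] at hya; linarith
  · push_neg at hstrict
    have heq : ∀ i, ⟪p, u i⟫ = c i := fun i => le_antisymm (hstrict i) (hple i)
    have hvall : ∀ i, v i ≠ 0 := fun i => hvne i (heq i)
    have hnorm_pos : ∀ i, (0:ℝ) < ‖v i‖ := fun i => norm_pos_iff.mpr (hvall i)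
    -- w candidate for a pair i j
    have wgood : ∀ i j, i ≠ j → ‖v j‖ • v i ≠ ‖v i‖ • (-v j) → False := by
      intro i j hij hne
      obtain ⟨hwi, hwj⟩ := aux_pos_pair (hvall i) (hvall j) hne
      set w := ‖v j‖ • v i + ‖v i‖ • v j with hwdef
      have hwn : ⟪w, n⟫ = 0 := by
        rw [hwdef, inner_add_left, real_inner_smul_left, real_inner_smul_left,
          hvn i, hvn j]
        ring
      exact finish i j hij w hwn
        (by rw [hwu w i hwn]; exact hwi) (by rw [hwu w j hwn]; exact hwj)
        (heq i) (heq j)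
    by_cases h01 : ‖v 1‖ • v 0 = ‖v 0‖ • (-v 1)
    · by_cases h12 : ‖v 2‖ • v 1 = ‖v 1‖ • (-v 2)
      · by_cases h02 : ‖v 2‖ • v 0 = ‖v 0‖ • (-v 2)
        · -- all three pairwise antiparallel: impossible
          set r0 := ‖v 0‖ with hr0
          set r1 := ‖v 1‖ with hr1
          set r2 := ‖v 2‖ with hr2
          have p0 := hnorm_pos 0
          have p1 := hnorm_pos 1
          have p2 := hnorm_pos 2
          have e0a : v 0 = (r1⁻¹ * r0) • (-v 1) := by
            have h := congrArg (fun x => (r1⁻¹ : ℝ) • x) h01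
            simpa [smul_smul, inv_mul_cancel₀ (a := r1) p1.ne'] using h
          have e1 : v 1 = (r2⁻¹ * r1) • (-v 2) := by
            have h := congrArg (fun x => (r2⁻¹ : ℝ) • x) h12
            simpa [smul_smul, inv_mul_cancel₀ (a := r2) p2.ne'] using h
          have e0b : v 0 = (r2⁻¹ * r0) • (-v 2) := by
            have h := congrArg (fun x => (r2⁻¹ : ℝ) • x) h02
            simpa [smul_smul, inv_mul_cancel₀ (a := r2) p2.ne'] using h
          rw [e1] at e0a
          have e0c : v 0 = ((r1⁻¹ * r0) * (r2⁻¹ * r1)) • v 2 := by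
            rw [e0a]; module
          have hzero : ((r2⁻¹*r0) + (r1⁻¹*r0)*(r2⁻¹*r1)) • v 2 = 0 := by
            rw [add_smul, ← e0c, e0b]
            module
          have hcpos : 0 < (r2⁻¹*r0) + (r1⁻¹*r0)*(r2⁻¹*r1) :=
            add_pos (mul_pos (inv_pos.mpr p2) p0)
              (mul_pos (mul_pos (inv_pos.mpr p1) p0) (mul_pos (inv_pos.mpr p2) p1))
          exact hvall 2 ((smul_eq_zero.mp hzero).resolve_left hcpos.ne')
        · exact wgood 0 2 (by omega) h02
      · exact wgood 1 2 (by omega) h12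
    · exact wgood 0 1 (by omega) h01
end

section
/- Let K ⊆ ℝ³ be a compact convex set with nonempty interior which is strictly convex and has smooth boundary in the sense that for every p ∈ frontier K there is exactly one unit vector n(p) ∈ ℝ³ with ⟪y − p, n(p)⟫ ≥ 0 for all y ∈ K (the unit inner normal at p). Let x ∈ ℝ³ \ K and define the visible region O_x = {p ∈ frontier K : ⟪p − x, n(p)⟫ ≥ 0}. Then O_x, with the subspace topology, is homeomorphic to the closed unit disk {z ∈ ℝ² : ‖z‖ ≤ 1}. -/
open scoped RealInnerProductSpace
open Set Metric Topology Filter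

variable {E : Type*} [NormedAddCommGroup E] [InnerProductSpace ℝ E] [FiniteDimensional ℝ E]

/-- Strict separation of a point from a closed convex nonempty set, inner-product form. -/
lemma sep_point {K : Set E} (hKcl : IsClosed K) (hKconv : Convex ℝ K) (hne : K.Nonempty)
    {q : E} (hq : q ∉ K) :
    ∃ (v : E) (c : ℝ), v ≠ 0 ∧ 0 < c ∧ ∀ y ∈ K, c ≤ ⟪y - q, v⟫ := by
  obtain ⟨f, u, hfu, hub⟩ := geometric_hahn_banach_point_closed hKconv hKcl hq
  set v := (InnerProductSpace.toDual ℝ E).symm f with hv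
  have hfv : ∀ z : E, ⟪z, v⟫ = f z := by
    intro z
    rw [real_inner_comm, hv, InnerProductSpace.toDual_symm_apply]
  obtain ⟨y₀, hy₀⟩ := hne
  refine ⟨v, u - f q, ?_, by linarith, fun y hy => ?_⟩
  · intro h0
    have := hub y₀ hy₀
    have h1 := hfv y₀
    rw [h0] at h1
    simp at h1
    have h2 := hfv q
    rw [h0] at h2
    simp at h2
    linarith
  · have := hub y hy
    rw [inner_sub_left, hfv, hfv]
    linarith

/-- Unit-vector strict separation. -/
lemma sep_point_unit {K : Set E} (hKcl : IsClosed K) (hKconv : Convex ℝ K) (hne : K.Nonempty)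
    {q : E} (hq : q ∉ K) :
    ∃ w : E, ‖w‖ = 1 ∧ ∀ y ∈ K, 0 ≤ ⟪y - q, w⟫ := by
  obtain ⟨v, c, hv, hc, hsep⟩ := sep_point hKcl hKconv hne hq
  refine ⟨‖v‖⁻¹ • v, ?_, fun y hy => ?_⟩
  · simp [norm_smul, inv_mul_cancel₀ (norm_ne_zero_iff.2 hv)]
  · rw [real_inner_smul_right]
    have h1 := hsep y hy
    have h2 : (0:ℝ) ≤ ‖v‖⁻¹ := by positivity
    nlinarith

/-- The cone lemma: at a smooth boundary point, any direction making positive inner product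
with the (unique) inner normal enters the body. -/
lemma exists_mem_of_inner_pos {K : Set E} (hKcl : IsClosed K) (hKconv : Convex ℝ K)
    {p v u : E} (hp : p ∈ K)
    (huniq : ∀ w : E, ‖w‖ = 1 → (∀ y ∈ K, 0 ≤ ⟪y - p, w⟫) → w = u)
    (hv : 0 < ⟪v, u⟫) : ∃ t : ℝ, 0 < t ∧ p + t • v ∈ K := by
  by_contra h
  push_neg at h
  set q : ℕ → E := fun k => p + (1 / ((k : ℝ) + 1)) • v with hqdef
  have hqK : ∀ k, q k ∉ K := fun k => h _ (by positivity)
  have hqt : Filter.Tendsto q Filter.atTop (𝓝 p) := by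
    have h1 : Filter.Tendsto (fun k : ℕ => (1 / ((k : ℝ) + 1))) Filter.atTop (𝓝 0) :=
      tendsto_one_div_add_atTop_nhds_zero_nat
    have := (h1.smul_const v).const_add p
    simpa [hqdef, one_div] using this
  choose w hw1 hw2 using fun k => sep_point_unit hKcl hKconv ⟨p, hp⟩ (hqK k)
  obtain ⟨u', hu'm, φ, hφ, hwu⟩ := (isCompact_sphere (0 : E) 1).tendsto_subseq
    (x := w) (fun k => by simpa [mem_sphere_zero_iff_norm] using hw1 k)
  have hu'1 : ‖u'‖ = 1 := by simpa [mem_sphere_zero_iff_norm] using hu'm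
  have hsupp : ∀ y ∈ K, 0 ≤ ⟪y - p, u'⟫ := by
    intro y hy
    have hqφ : Filter.Tendsto (q ∘ φ) Filter.atTop (𝓝 p) :=
      hqt.comp hφ.tendsto_atTop
    have hlim : Filter.Tendsto (fun k => ⟪y - q (φ k), w (φ k)⟫) Filter.atTop
        (𝓝 ⟪y - p, u'⟫) :=
      Filter.Tendsto.inner (tendsto_const_nhds.sub hqφ) hwu
    exact ge_of_tendsto hlim (Filter.Eventually.of_forall fun k => hw2 (φ k) y hy)
  have hu'u : u' = u := huniq u' hu'1 hsupp
  have hneg : ∀ k, ⟪v, w k⟫ ≤ 0 := by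
    intro k
    have h0 := hw2 k p hp
    have : p - q k = -((1 / ((k : ℝ) + 1)) • v) := by simp [hqdef]
    rw [this, inner_neg_left, real_inner_smul_left] at h0
    have hk : (0:ℝ) < 1 / ((k : ℝ) + 1) := by positivity
    nlinarith
  have hlim2 : Filter.Tendsto (fun k => ⟪v, w (φ k)⟫) Filter.atTop (𝓝 ⟪v, u'⟫) :=
    Filter.Tendsto.inner tendsto_const_nhds hwu
  have : ⟪v, u'⟫ ≤ 0 :=
    le_of_tendsto hlim2 (Filter.Eventually.of_forall fun k => hneg (φ k))
  rw [hu'u] at this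
  linarith

/-- Interior points satisfy the strict supporting inequality. -/
lemma inner_pos_of_interior {K : Set E} {z p np : E} (hz : z ∈ interior K)
    (hnp1 : ‖np‖ = 1) (hnp2 : ∀ y ∈ K, 0 ≤ ⟪y - p, np⟫) : 0 < ⟪z - p, np⟫ := by
  obtain ⟨r, hr, hball⟩ := Metric.isOpen_iff.1 isOpen_interior z hz
  have hz' : z - (r / 2) • np ∈ K := by
    apply interior_subset
    apply hball
    simp only [mem_ball, dist_eq_norm]
    have : z - (r / 2) • np - z = -((r / 2) • np) := by abel
    rw [this, norm_neg, norm_smul, hnp1]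
    rw [Real.norm_eq_abs, abs_of_pos (by linarith : (0:ℝ) < r / 2)]
    linarith
  have h0 := hnp2 _ hz'
  have : z - (r / 2) • np - p = (z - p) - (r/2) • np := by abel
  rw [this, inner_sub_left, real_inner_smul_left, real_inner_self_eq_norm_sq, hnp1] at h0
  nlinarith

/-- The visible region is closed. -/
lemma isClosed_visible {K : Set E}
    {n : E → E}
    (hn : ∀ p ∈ frontier K, ‖n p‖ = 1 ∧ ∀ y ∈ K, 0 ≤ ⟪y - p, n p⟫)
    (hn_unique : ∀ p ∈ frontier K, ∀ u : E,
      ‖u‖ = 1 → (∀ y ∈ K, 0 ≤ ⟪y - p, u⟫) → u = n p)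
    (x : E) : IsClosed {p ∈ frontier K | 0 ≤ ⟪p - x, n p⟫} := by
  apply IsSeqClosed.isClosed
  intro q p hq hqp
  have hqfr : ∀ k, q k ∈ frontier K := fun k => (hq k).1
  have hpfr : p ∈ frontier K := isClosed_frontier.mem_of_tendsto hqp
    (Filter.Eventually.of_forall hqfr)
  obtain ⟨u', hu'm, φ, hφ, hwu⟩ := (isCompact_sphere (0 : E) 1).tendsto_subseq
    (x := fun k => n (q k))
    (fun k => by simpa [mem_sphere_zero_iff_norm] using (hn _ (hqfr k)).1)
  have hu'1 : ‖u'‖ = 1 := by simpa [mem_sphere_zero_iff_norm] using hu'm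
  have hqφ : Filter.Tendsto (q ∘ φ) Filter.atTop (𝓝 p) := hqp.comp hφ.tendsto_atTop
  have hsupp : ∀ y ∈ K, 0 ≤ ⟪y - p, u'⟫ := by
    intro y hy
    have hlim : Filter.Tendsto (fun k => ⟪y - q (φ k), n (q (φ k))⟫) Filter.atTop
        (𝓝 ⟪y - p, u'⟫) := Filter.Tendsto.inner (tendsto_const_nhds.sub hqφ) hwu
    exact ge_of_tendsto hlim
      (Filter.Eventually.of_forall fun k => (hn _ (hqfr (φ k))).2 y hy)
  have hu'n : u' = n p := hn_unique p hpfr u' hu'1 hsupp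
  refine ⟨hpfr, ?_⟩
  have hlim : Filter.Tendsto (fun k => ⟪q (φ k) - x, n (q (φ k))⟫) Filter.atTop
      (𝓝 ⟪p - x, u'⟫) := Filter.Tendsto.inner (hqφ.sub tendsto_const_nhds) hwu
  rw [← hu'n]
  exact ge_of_tendsto hlim (Filter.Eventually.of_forall fun k => (hq (φ k)).2)

set_option maxHeartbeats 2000000 in
/-- For a smooth strictly convex body `K ⊆ ℝ³` with unit inner
normal `n p` at each boundary point `p`, and a point `x ∉ K`, the visible region
`O_x = {p ∈ frontier K | ⟪p - x, n p⟫ ≥ 0}` is homeomorphic to the closed unit disk. -/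
theorem visible_region_homeomorph_disk
    (K : Set (EuclideanSpace ℝ (Fin 3)))
    (hKcomp : IsCompact K) (hKconv : Convex ℝ K)
    (hKint : (interior K).Nonempty) (hKstrict : StrictConvex ℝ K)
    (n : EuclideanSpace ℝ (Fin 3) → EuclideanSpace ℝ (Fin 3))
    (hn : ∀ p ∈ frontier K, ‖n p‖ = 1 ∧ ∀ y ∈ K, 0 ≤ ⟪y - p, n p⟫)
    (hn_unique : ∀ p ∈ frontier K, ∀ u : EuclideanSpace ℝ (Fin 3),
      ‖u‖ = 1 → (∀ y ∈ K, 0 ≤ ⟪y - p, u⟫) → u = n p)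
    (x : EuclideanSpace ℝ (Fin 3)) (hx : x ∉ K) :
    Nonempty
      (({p ∈ frontier K | 0 ≤ ⟪p - x, n p⟫} : Set (EuclideanSpace ℝ (Fin 3))) ≃ₜ
        {z : EuclideanSpace ℝ (Fin 2) | ‖z‖ ≤ 1}) := by
  have hKcl : IsClosed K := hKcomp.isClosed
  have hKne : K.Nonempty := hKint.mono interior_subset
  have hfrK : frontier K ⊆ K := hKcl.frontier_subset
  -- separating hyperplane
  obtain ⟨ν, c, hν0, hc, hsep⟩ := sep_point hKcl hKconv hKne hx
  set W : Submodule ℝ (EuclideanSpace ℝ (Fin 3)) := (ℝ ∙ ν)ᗮ with hWdef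
  set P : (EuclideanSpace ℝ (Fin 3)) →L[ℝ] W := Submodule.orthogonalProjectionOnto W with hPdef
  set g : (EuclideanSpace ℝ (Fin 3)) → ℝ := fun y => ⟪y - x, ν⟫ with hgdef
  have hgK : ∀ y ∈ K, c ≤ g y := hsep
  have hgKpos : ∀ y ∈ K, 0 < g y := fun y hy => lt_of_lt_of_le hc (hgK y hy)
  set Φ : (EuclideanSpace ℝ (Fin 3)) → W := fun y => (g y)⁻¹ • (P (y - x)) with hΦdef
  set O : Set (EuclideanSpace ℝ (Fin 3)) := {p ∈ frontier K | 0 ≤ ⟪p - x, n p⟫} with hOdef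
  have hOsub : O ⊆ K := fun p hp => hfrK hp.1
  -- decomposition lemma
  have hinnerW : ∀ w : W, ⟪(w : (EuclideanSpace ℝ (Fin 3))), ν⟫ = 0 := by
    intro w
    have h1 : (w : (EuclideanSpace ℝ (Fin 3))) ∈ (ℝ ∙ ν)ᗮ := w.2
    rw [Submodule.mem_orthogonal] at h1
    have h2 := h1 ν (Submodule.mem_span_singleton_self ν)
    rwa [real_inner_comm] at h2
  have hdec : ∀ v : (EuclideanSpace ℝ (Fin 3)), (P v : (EuclideanSpace ℝ (Fin 3))) = v - (⟪v, ν⟫ / ‖ν‖ ^ 2) • ν := by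
    intro v
    have hmem : v - (P v : (EuclideanSpace ℝ (Fin 3))) ∈ ℝ ∙ ν := by
      have h : v - (P v : (EuclideanSpace ℝ (Fin 3))) ∈ Wᗮ := Submodule.sub_starProjection_mem_orthogonal (K := W) v
      rwa [show Wᗮ = ℝ ∙ ν from Submodule.orthogonal_orthogonal _] at h
    obtain ⟨a, ha⟩ := Submodule.mem_span_singleton.1 hmem
    have h1 : ⟪v - (P v : (EuclideanSpace ℝ (Fin 3))), ν⟫ = a * ‖ν‖ ^ 2 := by
      rw [← ha, real_inner_smul_left, real_inner_self_eq_norm_sq]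
    rw [inner_sub_left, hinnerW (P v), sub_zero] at h1
    have hν2 : ‖ν‖ ^ 2 ≠ 0 := pow_ne_zero 2 (norm_ne_zero_iff.2 hν0)
    have ha' : a = ⟪v, ν⟫ / ‖ν‖ ^ 2 := by field_simp [h1]; linarith
    have := ha
    rw [ha'] at this
    rw [this]
    abel
  -- Φ is constant on rays from x
  have hΦray : ∀ (y : (EuclideanSpace ℝ (Fin 3))) (t : ℝ), 0 < t → Φ (x + t • (y - x)) = Φ y := by
    intro y t ht
    have hg : g (x + t • (y - x)) = t * g y := by
      simp only [hgdef]
      rw [add_sub_cancel_left, real_inner_smul_left]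
    simp only [hΦdef, hg, add_sub_cancel_left, map_smul]
    rw [smul_smul, mul_inv]
    congr 1
    rcases eq_or_ne (g y) 0 with h0 | h0
    · simp [h0]
    · field_simp
  -- every point of K projects from a first-hit point in the visible region
  have hhit : ∀ y ∈ K, ∃ p ∈ O, ∃ t : ℝ, 0 < t ∧ p = x + t • (y - x) := by
    intro y hy
    set T : Set ℝ := Icc (0:ℝ) 1 ∩ {t : ℝ | x + t • (y - x) ∈ K} with hTdef
    have hTcl : IsClosed T :=
      isClosed_Icc.inter (IsClosed.preimage (by continuity) hKcl)
    have hT1 : (1:ℝ) ∈ T := ⟨⟨zero_le_one, le_refl 1⟩, by simpa using hy⟩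
    have hTbdd : BddBelow T := ⟨0, fun t ht => ht.1.1⟩
    set t₀ := sInf T with ht₀def
    have ht₀T : t₀ ∈ T := hTcl.csInf_mem ⟨1, hT1⟩ hTbdd
    have ht₀pos : 0 < t₀ := by
      rcases lt_or_eq_of_le ht₀T.1.1 with h | h
      · exact h
      · exfalso; apply hx
        have h2 := ht₀T.2
        rw [← h] at h2
        simpa using h2
    have ht₀le : t₀ ≤ 1 := ht₀T.1.2
    set p := x + t₀ • (y - x) with hpdef
    have hpK : p ∈ K := ht₀T.2
    have hyx : y - x ≠ 0 := sub_ne_zero.2 (fun h => hx (h ▸ hy))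
    have hpfr : p ∈ frontier K := by
      rw [hKcl.frontier_eq]
      refine ⟨hpK, fun hint => ?_⟩
      obtain ⟨r, hr, hball⟩ := Metric.isOpen_iff.1 isOpen_interior p hint
      have hnorm_pos : 0 < ‖y - x‖ := norm_pos_iff.2 hyx
      set δ := min t₀ (r / (2 * ‖y - x‖ + 1)) with hδdef
      have hδpos : 0 < δ := lt_min ht₀pos (by positivity)
      have hδle : δ ≤ t₀ := min_le_left _ _
      have hδle2 : δ ≤ r / (2 * ‖y - x‖ + 1) := min_le_right _ _
      have hmem : x + (t₀ - δ) • (y - x) ∈ K := by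
        apply interior_subset
        apply hball
        simp only [mem_ball, dist_eq_norm]
        have hid : x + (t₀ - δ) • (y - x) - p = -(δ • (y - x)) := by
          rw [hpdef]; module
        rw [hid, norm_neg, norm_smul, Real.norm_eq_abs, abs_of_pos hδpos]
        have h3 : δ * (2 * ‖y - x‖ + 1) ≤ r := by
          rw [le_div_iff₀ (by positivity)] at hδle2
          linarith
        nlinarith
      have h1 : t₀ - δ ∈ T := ⟨⟨by linarith, by linarith⟩, hmem⟩
      have := csInf_le hTbdd h1
      rw [← ht₀def] at this
      linarith
    refine ⟨p, ⟨hpfr, ?_⟩, t₀, ht₀pos, hpdef⟩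
    by_contra hneg
    push_neg at hneg
    have hinner : 0 < ⟪x - p, n p⟫ := by
      have hxp : x - p = -(p - x) := by abel
      rw [hxp, inner_neg_left]
      linarith
    obtain ⟨s, hs, hsK⟩ :=
      exists_mem_of_inner_pos hKcl hKconv hpK (hn_unique p hpfr) hinner
    have hs1 : s < 1 := by
      by_contra hs1
      push_neg at hs1
      apply hx
      have hs0 : s ≠ 0 := by linarith
      have hxcomb : x = (1 - 1/s) • p + (1/s) • (p + s • (x - p)) := by
        match_scalars <;> field_simp <;> ring
      rw [hxcomb]
      refine hKconv hpK hsK ?_ (by positivity) (by ring)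
      have : 1/s ≤ 1 := by
        rw [div_le_one (by linarith)]
        exact hs1
      linarith
    have hmem2 : t₀ * (1 - s) ∈ T := by
      refine ⟨⟨by nlinarith, by nlinarith⟩, ?_⟩
      show x + (t₀ * (1 - s)) • (y - x) ∈ K
      have hid2 : x + (t₀ * (1 - s)) • (y - x) = p + s • (x - p) := by
        rw [hpdef]; module
      rw [hid2]
      exact hsK
    have := csInf_le hTbdd hmem2
    rw [← ht₀def] at this
    nlinarith
  -- image equality
  have himg : Φ '' O = Φ '' K := by
    apply Subset.antisymm (image_mono hOsub)
    rintro _ ⟨y, hy, rfl⟩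
    obtain ⟨p, hpO, t, ht, hp⟩ := hhit y hy
    exact ⟨p, hpO, by rw [hp, hΦray y t ht]⟩
  -- injectivity on the visible region
  have hkey : ∀ p ∈ O, ∀ q ∈ O, ∀ s : ℝ, 1 ≤ s → q - x = s • (p - x) → p = q := by
    intro p hp q hq s hs hpq
    rcases eq_or_lt_of_le hs with hs1 | hs1
    · rw [← hs1, one_smul] at hpq
      have := sub_left_injective hpq
      exact this.symm
    · have hpK : p ∈ K := hOsub hp
      have hqK : q ∈ K := hOsub hq
      have hpx : p - x ≠ 0 := sub_ne_zero.2 (fun h => hx (h ▸ hpK))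
      have hpqne : p ≠ q := by
        intro h
        rw [← h] at hpq
        have h0 : (s - 1) • (p - x) = 0 := by
          rw [sub_smul, one_smul, ← hpq]
          abel
        rcases smul_eq_zero.1 h0 with h1 | h1
        · have : s ≠ 1 := ne_of_gt hs1
          exact this (by linarith [sub_eq_zero.1 h1])
        · exact hpx h1
      have hsub : p - q = (1 - s) • (p - x) := by
        have h4 : p - q = (p - x) - (q - x) := by abel
        rw [h4, hpq]
        module
      have hq0 : 0 ≤ ⟪q - x, n q⟫ := hq.2
      have hsupp := (hn q hq.1).2 p hpK
      have hcalc : ⟪p - q, n q⟫ = ((1 - s) / s) * ⟪q - x, n q⟫ := by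
        rw [hsub, real_inner_smul_left]
        have h2 : ⟪q - x, n q⟫ = s * ⟪p - x, n q⟫ := by
          rw [hpq, real_inner_smul_left]
        rw [h2]
        field_simp
      have hle : ⟪p - q, n q⟫ ≤ 0 := by
        rw [hcalc]
        have hdiv : (1 - s) / s ≤ 0 :=
          div_nonpos_iff.2 (Or.inr ⟨by linarith, by linarith⟩)
        exact mul_nonpos_of_nonpos_of_nonneg hdiv hq0
      have heq0 : ⟪p - q, n q⟫ = 0 := le_antisymm hle (by simpa using hsupp)
      have hmid : (1/2 : ℝ) • p + (1/2 : ℝ) • q ∈ interior K :=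
        hKstrict hpK hqK hpqne (by norm_num) (by norm_num) (by norm_num)
      have hpos := inner_pos_of_interior hmid (hn q hq.1).1 (hn q hq.1).2
      have hmq : (1/2 : ℝ) • p + (1/2 : ℝ) • q - q = (1/2 : ℝ) • (p - q) := by
        module
      rw [hmq, real_inner_smul_left, heq0] at hpos
      linarith
  have hrepr : ∀ p ∈ K, (g p)⁻¹ • (p - x) =
      ((Φ p : (EuclideanSpace ℝ (Fin 3)))) + (‖ν‖ ^ 2)⁻¹ • ν := by
    intro p hp
    have hgp := hgKpos p hp
    have hco : (Φ p : (EuclideanSpace ℝ (Fin 3))) =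
        (g p)⁻¹ • ((P (p - x) : (EuclideanSpace ℝ (Fin 3)))) := by
      simp [hΦdef]
    rw [hco, hdec]
    have hinner_g : ⟪p - x, ν⟫ = g p := rfl
    have hν2 : ‖ν‖ ^ 2 ≠ 0 := pow_ne_zero 2 (norm_ne_zero_iff.2 hν0)
    have hgp0 : g p ≠ 0 := ne_of_gt hgp
    match_scalars
    · ring
    · ring
    · rw [hinner_g]
      field_simp
      ring
  have hinj : ∀ p ∈ O, ∀ q ∈ O, Φ p = Φ q → p = q := by
    intro p hp q hq hΦeq
    have hgp := hgKpos p (hOsub hp)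
    have hgq := hgKpos q (hOsub hq)
    have h1 : (g p)⁻¹ • (p - x) = (g q)⁻¹ • (q - x) := by
      rw [hrepr p (hOsub hp), hrepr q (hOsub hq), hΦeq]
    have h2 : q - x = (g q / g p) • (p - x) := by
      have h3 : (g q) • ((g q)⁻¹ • (q - x)) = (g q) • ((g p)⁻¹ • (p - x)) := by
        rw [h1]
      rw [smul_smul, smul_smul, mul_inv_cancel₀ (ne_of_gt hgq), one_smul] at h3
      rw [h3, div_eq_mul_inv]
    have h2' : p - x = (g p / g q) • (q - x) := by
      have h3 : (g p) • ((g p)⁻¹ • (p - x)) = (g p) • ((g q)⁻¹ • (q - x)) := by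
        rw [h1]
      rw [smul_smul, smul_smul, mul_inv_cancel₀ (ne_of_gt hgp), one_smul] at h3
      rw [h3, div_eq_mul_inv]
    rcases le_total (g p) (g q) with h | h
    · exact hkey p hp q hq _ ((one_le_div hgp).2 h) h2
    · exact (hkey q hq p hp _ ((one_le_div hgq).2 h) h2').symm
  -- topological facts about O
  have hOcl : IsClosed O := isClosed_visible hn hn_unique x
  have hOcomp : IsCompact O := hKcomp.of_isClosed_subset hOcl hOsub
  have hgcont : Continuous g :=
    (continuous_id.sub continuous_const).inner continuous_const
  have hΦcont : ContinuousOn Φ K := by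
    refine ContinuousOn.smul (f := fun y => (g y)⁻¹) (g := fun y => P (y - x)) ?_ ?_
    · exact (hgcont.continuousOn.inv₀ fun y hy => ne_of_gt (hgKpos y hy))
    · exact (P.continuous.comp (continuous_id.sub continuous_const)).continuousOn
  set S : Set W := Φ '' K with hSdef
  have hScomp : IsCompact S := hKcomp.image_of_continuousOn hΦcont
  -- convexity of the shadow S
  have hSconv : Convex ℝ S := by
    rintro w₁ ⟨y₁, hy₁, rfl⟩ w₂ ⟨y₂, hy₂, rfl⟩ a b ha hb hab
    have ht₁ : 0 < g y₁ := hgKpos y₁ hy₁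
    have ht₂ : 0 < g y₂ := hgKpos y₂ hy₂
    set t₁ := g y₁ with ht₁def
    set t₂ := g y₂ with ht₂def
    set D := a * t₂ + b * t₁ with hDdef
    have hD : 0 < D := by
      rcases eq_or_lt_of_le ha with h | h
      · have hb1 : b = 1 := by linarith
        rw [hDdef, ← h, hb1]
        simpa using ht₁
      · rw [hDdef]
        nlinarith [mul_pos h ht₂, mul_nonneg hb ht₁.le]
    set l := a * t₂ / D with hldef
    have hl0 : 0 ≤ l := by positivity
    have hl1 : l ≤ 1 := by
      rw [hldef, div_le_one hD]
      nlinarith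
    set y := l • y₁ + (1 - l) • y₂ with hydef
    have hyK : y ∈ K := hKconv hy₁ hy₂ hl0 (by linarith) (by ring)
    refine ⟨y, hyK, ?_⟩
    have hvec : y - x = l • (y₁ - x) + (1 - l) • (y₂ - x) := by
      rw [hydef]; module
    have hgy : g y = l * t₁ + (1 - l) * t₂ := by
      show ⟪y - x, ν⟫ = _
      rw [hvec, inner_add_left, real_inner_smul_left, real_inner_smul_left]
    have hgy' : g y = t₁ * t₂ / D := by
      rw [hgy, hldef]
      field_simp
      linear_combination t₁ * hab
    show Φ y = a • Φ y₁ + b • Φ y₂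
    show (g y)⁻¹ • P (y - x) = a • ((g y₁)⁻¹ • P (y₁ - x)) + b • ((g y₂)⁻¹ • P (y₂ - x))
    have hPy : P (y - x) = l • P (y₁ - x) + (1 - l) • P (y₂ - x) := by
      rw [hvec, map_add, map_smul, map_smul]
    rw [hPy]
    rw [smul_add, smul_smul, smul_smul, smul_smul, smul_smul]
    have hcoef1 : (g y)⁻¹ * l = a * t₁⁻¹ := by
      rw [hgy', hldef]
      field_simp
    have hcoef2 : (g y)⁻¹ * (1 - l) = b * t₂⁻¹ := by
      have h1l : 1 - l = b * t₁ / D := by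
        rw [hldef]
        field_simp
        ring
      rw [hgy', h1l]
      field_simp
    rw [hcoef1, hcoef2]
  -- nonempty interior of the shadow S
  obtain ⟨z, hz⟩ := hKint
  have hgz : 0 < g z := hgKpos z (interior_subset hz)
  have hν2 : ‖ν‖ ^ 2 ≠ 0 := pow_ne_zero 2 (norm_ne_zero_iff.2 hν0)
  set A : W → (EuclideanSpace ℝ (Fin 3)) :=
    fun w => x + (g z) • (w : (EuclideanSpace ℝ (Fin 3))) + (g z / ‖ν‖ ^ 2) • ν with hAdef
  have hAcont : Continuous A :=
    (continuous_const.add (continuous_subtype_val.const_smul (g z))).add continuous_const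
  have hA1 : A (Φ z) = z := by
    show x + (g z) • ((Φ z : (EuclideanSpace ℝ (Fin 3)))) + (g z / ‖ν‖ ^ 2) • ν = z
    have hco : (Φ z : (EuclideanSpace ℝ (Fin 3))) =
        (g z)⁻¹ • ((P (z - x) : (EuclideanSpace ℝ (Fin 3)))) := by simp [hΦdef]
    rw [hco, hdec]
    have hinner_gz : ⟪z - x, ν⟫ = g z := rfl
    rw [hinner_gz]
    have hgz0 : g z ≠ 0 := ne_of_gt hgz
    match_scalars <;> field_simp <;> ring
  have hAx : ∀ w : W, A w - x = (g z) • (w : (EuclideanSpace ℝ (Fin 3)))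
      + (g z / ‖ν‖ ^ 2) • ν := by
    intro w
    show x + (g z) • (w : (EuclideanSpace ℝ (Fin 3))) + (g z / ‖ν‖ ^ 2) • ν - x = _
    abel
  have hA2 : ∀ w : W, Φ (A w) = w := by
    intro w
    have hgA : g (A w) = g z := by
      show ⟪A w - x, ν⟫ = g z
      rw [hAx w, inner_add_left, real_inner_smul_left, real_inner_smul_left, hinnerW w,
        real_inner_self_eq_norm_sq]
      field_simp
      ring
    show (g (A w))⁻¹ • P (A w - x) = w
    rw [hgA, hAx w, map_add, map_smul, map_smul]
    have hPw : P ((w : (EuclideanSpace ℝ (Fin 3)))) = w :=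
      Submodule.orthogonalProjection_mem_subspace_eq_self w
    have hνW : ν ∈ Wᗮ :=
      (ℝ ∙ ν).le_orthogonal_orthogonal (Submodule.mem_span_singleton_self ν)
    have hPν : P ν = 0 :=
      Submodule.orthogonalProjectionOnto_apply_of_mem_orthogonal hνW
    rw [hPw, hPν, smul_zero, add_zero, smul_smul, inv_mul_cancel₀ (ne_of_gt hgz), one_smul]
  have hSint : (interior S).Nonempty := by
    refine ⟨Φ z, ?_⟩
    rw [mem_interior]
    refine ⟨A ⁻¹' (interior K), fun w hw => ⟨A w, interior_subset hw, hA2 w⟩,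
      isOpen_interior.preimage hAcont, ?_⟩
    rw [mem_preimage, hA1]
    exact hz
  -- the homeomorphism O ≃ₜ S
  have hmemS : ∀ p : O, Φ (p : (EuclideanSpace ℝ (Fin 3))) ∈ S :=
    fun p => mem_image_of_mem Φ (hOsub p.2)
  set F : O → S := fun p => ⟨Φ p, hmemS p⟩ with hFdef
  have hFbij : Function.Bijective F := by
    constructor
    · intro p q hpq
      apply Subtype.ext
      exact hinj p p.2 q q.2 (congrArg Subtype.val hpq)
    · rintro ⟨w, hw⟩
      obtain ⟨p, hp, hΦp⟩ : w ∈ Φ '' O := by rw [himg]; exact hw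
      exact ⟨⟨p, hp⟩, Subtype.ext hΦp⟩
  have hFcont : Continuous F := by
    apply Continuous.subtype_mk
    exact hΦcont.comp_continuous continuous_subtype_val (fun p => hOsub p.2)
  have hOcs : CompactSpace O := isCompact_iff_compactSpace.1 hOcomp
  let e₁ : O ≃ₜ S :=
    Continuous.homeoOfEquivCompactToT2 (f := Equiv.ofBijective F hFbij) hFcont
  -- S ≃ₜ closed unit ball of W
  have hSbd : Bornology.IsBounded S := hScomp.isBounded
  obtain ⟨h, -, hcl, -⟩ :=
    exists_homeomorph_image_interior_closure_frontier_eq_unitBall hSconv hSint hSbd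
  rw [hScomp.isClosed.closure_eq] at hcl
  let e₂ : S ≃ₜ (closedBall (0 : W) 1 : Set W) :=
    (h.image S).trans (Homeomorph.setCongr hcl)
  -- W ≃ₜ ℝ², preserving the unit ball
  have hdim : Module.finrank ℝ W = 2 := by
    have h1 := Submodule.finrank_add_finrank_orthogonal (K := (ℝ ∙ ν))
    rw [finrank_span_singleton hν0] at h1
    have h2 : Module.finrank ℝ (EuclideanSpace ℝ (Fin 3)) = 3 := finrank_euclideanSpace_fin
    rw [h2] at h1
    have h3 : Module.finrank ℝ W = Module.finrank ℝ ((ℝ ∙ ν)ᗮ : Submodule ℝ (EuclideanSpace ℝ (Fin 3))) := rfl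
    rw [h3]
    omega
  let L : W ≃ₗᵢ[ℝ] EuclideanSpace ℝ (Fin 2) :=
    ((stdOrthonormalBasis ℝ W).reindex (finCongr hdim)).repr
  have himgL : (L.toHomeomorph) '' (closedBall (0 : W) 1) =
      {z : EuclideanSpace ℝ (Fin 2) | ‖z‖ ≤ 1} := by
    ext ζ
    simp only [mem_image, mem_closedBall, dist_zero_right, mem_setOf_eq,
      LinearIsometryEquiv.coe_toHomeomorph]
    constructor
    · rintro ⟨w, hw, rfl⟩
      simpa [L.norm_map] using hw
    · intro hζ
      refine ⟨L.symm ζ, ?_, L.apply_symm_apply ζ⟩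
      simpa [L.symm.norm_map] using hζ
  let e₃ : (closedBall (0 : W) 1 : Set W) ≃ₜ {z : EuclideanSpace ℝ (Fin 2) | ‖z‖ ≤ 1} :=
    (L.toHomeomorph.image _).trans (Homeomorph.setCongr himgL)
  exact ⟨(e₁.trans e₂).trans e₃⟩
end

section
/- Let K ⊆ ℝ³ be a compact convex set with nonempty interior which is strictly convex and has smooth boundary in the sense that for every p ∈ frontier K there is exactly one unit vector u ∈ ℝ³ with ⟪y − p, u⟫ ≤ 0 for all y ∈ K. Assume K ⊆ {x ∈ ℝ³ : x₃ ≤ 1} and K ∩ {x ∈ ℝ³ : x₃ = 1} = {N}, where N = (0,0,1). Define h : frontier K → OnePoint ℂ by h(N) = ∞ and, for p = (p₁,p₂,p₃) ∈ frontier K with p ≠ N, h(p) = (p₁ + i·p₂)/(1 − p₃). Then h is a homeomorphism from frontier K onto OnePoint ℂ. -/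
open scoped RealInnerProductSpace

noncomputable abbrev E3 := EuclideanSpace ℝ (Fin 3)
noncomputable def Nv : E3 := EuclideanSpace.single (2 : Fin 3) (1 : ℝ)

lemma Nv_two : Nv 2 = 1 := by simp [Nv, EuclideanSpace.single_apply]

lemma not_mem_interior (K : Set E3) (hKbelow : ∀ x ∈ K, x 2 ≤ (1:ℝ)) :
    Nv ∉ interior K := by
  intro hNi
  obtain ⟨ε, hε, hball⟩ := Metric.isOpen_iff.mp isOpen_interior Nv hNi
  have hmem : Nv + (ε/2) • Nv ∈ Metric.ball Nv ε := by
    rw [mem_ball_iff_norm, add_sub_cancel_left, norm_smul]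
    have : ‖Nv‖ = 1 := by
      simp [Nv, EuclideanSpace.norm_single]
    rw [this, mul_one, Real.norm_eq_abs, abs_of_pos (by linarith : (0:ℝ) < ε/2)]
    linarith
  have : (Nv + (ε/2) • Nv) 2 ≤ 1 := hKbelow _ (interior_subset (hball hmem))
  have h2 : (Nv + (ε/2) • Nv) 2 = 1 + ε/2 := by
    simp [Nv_two]
  rw [h2] at this
  linarith

lemma ray_enters (K : Set E3) (hKconv : Convex ℝ K) (hKint : (interior K).Nonempty)
    (hKbelow : ∀ x ∈ K, x 2 ≤ (1:ℝ)) (hNK : Nv ∈ K)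
    (huniq : ∀ u : E3, ‖u‖ = 1 → (∀ y ∈ K, ⟪y - Nv, u⟫ ≤ 0) → u = Nv)
    (v : E3) (hv : v 2 < 0) :
    ∃ t : ℝ, 0 < t ∧ Nv + t • v ∈ interior K := by
  by_contra hcon
  push_neg at hcon
  set R : Set E3 := (fun t : ℝ => Nv + t • v) '' Set.Ici 0 with hR
  have hRconv : Convex ℝ R := by
    rintro x ⟨s, hs, rfl⟩ y ⟨t, ht, rfl⟩ a b ha hb hab
    refine ⟨a*s + b*t, ?_, ?_⟩
    · have : 0 ≤ a*s := mul_nonneg ha hs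
      have : 0 ≤ b*t := mul_nonneg hb ht
      simp only [Set.mem_Ici]; positivity
    · have : a • (Nv + s • v) + b • (Nv + t • v)
          = (a + b) • Nv + (a*s + b*t) • v := by module
      rw [this, hab, one_smul]
  have hdisj : Disjoint (interior K) R := by
    rw [Set.disjoint_left]
    rintro x hx ⟨t, ht, rfl⟩
    rcases eq_or_lt_of_le (Set.mem_Ici.mp ht) with h0 | h0
    · rw [← h0] at hx
      simp only [zero_smul, add_zero] at hx
      exact not_mem_interior K hKbelow hx
    · exact hcon t h0 hx
  obtain ⟨f, c, hfc, hcf⟩ :=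
    geometric_hahn_banach_open (hKconv.interior) isOpen_interior hRconv hdisj
  obtain ⟨a₀, ha₀⟩ := hKint
  -- every point of K has f-value ≤ c
  have hle : ∀ y ∈ K, f y ≤ c := by
    intro y hy
    by_contra hlt
    push_neg at hlt
    set d := f y - c with hd
    have hd0 : 0 < d := by simp [hd]; linarith
    have key : ∀ b : ℝ, 0 < b → b ≤ 1 → (1-b) * f y + b * f a₀ < c := by
      intro b hb hb1
      have : (1-b) • y + b • a₀ ∈ interior K :=
        hKconv.combo_self_interior_mem_interior hy ha₀ (by linarith) hb (by ring)
      have := hfc _ this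
      simpa [map_add, map_smul, smul_eq_mul] using this
    set b := min (1/2 : ℝ) (d / (2 * (|f a₀ - f y| + 1))) with hbdef
    have hbpos : 0 < b := by
      apply lt_min (by norm_num)
      positivity
    have hb1 : b ≤ 1 := le_trans (min_le_left _ _) (by norm_num)
    have hkey := key b hbpos hb1
    have hble : b ≤ d / (2 * (|f a₀ - f y| + 1)) := min_le_right _ _
    have habs : b * |f a₀ - f y| ≤ d / 2 := by
      have h1 : 0 < 2 * (|f a₀ - f y| + 1) := by positivity
      rw [le_div_iff₀ h1] at hble
      nlinarith [abs_nonneg (f a₀ - f y)]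
    have : b * (f a₀ - f y) ≥ -(d/2) := by
      nlinarith [neg_abs_le (f a₀ - f y), hbpos.le]
    nlinarith [hkey]
  have hNc : c ≤ f Nv := hcf Nv ⟨0, Set.self_mem_Ici, by simp⟩
  have hfN : f Nv = c := le_antisymm (hle Nv hNK) hNc
  have hfv : 0 ≤ f v := by
    have := hcf (Nv + (1:ℝ) • v) ⟨1, by norm_num, rfl⟩
    simp only [one_smul, map_add] at this
    linarith
  -- Riesz representation
  set w := (InnerProductSpace.toDual ℝ E3).symm f with hw
  have hwinner : ∀ x : E3, ⟪w, x⟫ = f x := fun x => InnerProductSpace.toDual_symm_apply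
  have hwne : w ≠ 0 := by
    intro h0
    have h1 : f a₀ < c := hfc a₀ ha₀
    have h2 : f a₀ = 0 := by rw [← hwinner, h0, inner_zero_left]
    have h3 : f Nv = 0 := by rw [← hwinner, h0, inner_zero_left]
    rw [h2] at h1; rw [h3] at hfN; linarith
  set u := ‖w‖⁻¹ • w with hu
  have hun : ‖u‖ = 1 := norm_smul_inv_norm hwne
  have hnormal : ∀ y ∈ K, ⟪y - Nv, u⟫ ≤ 0 := by
    intro y hy
    rw [hu, real_inner_smul_right]
    have : ⟪y - Nv, w⟫ ≤ 0 := by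
      rw [real_inner_comm, hwinner, map_sub]
      have := hle y hy
      linarith [hfN]
    have hnn : (0:ℝ) ≤ ‖w‖⁻¹ := by positivity
    exact mul_nonpos_of_nonneg_of_nonpos hnn this
  have huN : u = Nv := huniq u hun hnormal
  have : ⟪u, v⟫ = v 2 := by
    rw [huN]
    simp [Nv, EuclideanSpace.inner_single_left]
  have h2 : (0:ℝ) ≤ ⟪u, v⟫ := by
    rw [hu, real_inner_smul_left, hwinner]
    exact mul_nonneg (by positivity) hfv
  rw [this] at h2
  linarith

lemma Nv_zero : Nv 0 = 0 := by simp [Nv, EuclideanSpace.single_apply]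
lemma Nv_one : Nv 1 = 0 := by simp [Nv, EuclideanSpace.single_apply]
lemma E3_ext (x y : E3) (h0 : x 0 = y 0) (h1 : x 1 = y 1) (h2 : x 2 = y 2) : x = y := by
  ext i
  fin_cases i <;> assumption


lemma flat_near (K : Set E3) (hKconv : Convex ℝ K) (hKclosed : IsClosed K)
    (hKint : (interior K).Nonempty)
    (hKbelow : ∀ x ∈ K, x 2 ≤ (1:ℝ)) (hNK : Nv ∈ K)
    (huniq : ∀ u : E3, ‖u‖ = 1 → (∀ y ∈ K, ⟪y - Nv, u⟫ ≤ 0) → u = Nv)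
    (ε : ℝ) (hε : 0 < ε) :
    ∃ δ : ℝ, 0 < δ ∧ ∀ q ∈ frontier K, q ≠ Nv → ‖q - Nv‖ < δ →
      1 - q 2 ≤ ε * Real.sqrt ((q 0)^2 + (q 1)^2) := by
  set c := ε / (1 + ε) with hcdef
  have hc0 : 0 < c := by positivity
  have hc1 : c < 1 := by
    rw [hcdef, div_lt_one (by linarith)]; linarith
  have hcε : c * (1 + ε) = ε := by
    rw [hcdef, div_mul_cancel₀]; linarith
  set S : Set E3 := {w : E3 | ‖w‖ = 1 ∧ w 2 ≤ -c} with hSdef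
  have hScl : IsClosed S := by
    apply IsClosed.inter
    · exact isClosed_eq continuous_norm continuous_const
    · exact isClosed_le (EuclideanSpace.proj (2 : Fin 3) : E3 →L[ℝ] ℝ).continuous
        continuous_const
  have hScomp : IsCompact S := by
    refine (isCompact_sphere (0 : E3) 1).of_isClosed_subset hScl ?_
    intro w hw
    simpa [mem_sphere_iff_norm] using hw.1
  have hprop : ∀ w ∈ S, ∃ tw : ℝ, 0 < tw ∧ ∃ ρ : ℝ, 0 < ρ ∧
      Metric.ball (Nv + tw • w) ρ ⊆ interior K := by
    intro w hw
    have hw2 : w 2 < 0 := lt_of_le_of_lt hw.2 (by linarith)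
    obtain ⟨tw, htw, hmem⟩ := ray_enters K hKconv hKint hKbelow hNK huniq w hw2
    obtain ⟨ρ, hρ, hball⟩ := Metric.isOpen_iff.mp isOpen_interior _ hmem
    exact ⟨tw, htw, ρ, hρ, hball⟩
  choose! t ht ρ hρ hball using hprop
  have hcov : S ⊆ ⋃ w ∈ S, Metric.ball w (ρ w / t w) := by
    intro w hw
    refine Set.mem_biUnion hw ?_
    exact Metric.mem_ball_self (div_pos (hρ w hw) (ht w hw))
  obtain ⟨F, hFS, hFfin, hFcov⟩ :=
    hScomp.elim_finite_subcover_image (fun w _ => Metric.isOpen_ball) hcov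
  have hw0 : (-Nv : E3) ∈ S := by
    constructor
    · rw [norm_neg]; simp [Nv, EuclideanSpace.norm_single]
    · show (-Nv : E3) 2 ≤ -c
      have : (-Nv : E3) 2 = -1 := by simp [Nv_two]
      rw [this]; linarith
  have hFne : F.Nonempty := by
    obtain ⟨i, hi, -⟩ := Set.mem_iUnion₂.mp (hFcov hw0)
    exact ⟨i, hi⟩
  set Fs := hFfin.toFinset with hFs
  have hFsne : Fs.Nonempty := by
    obtain ⟨i, hi⟩ := hFne
    exact ⟨i, hFfin.mem_toFinset.mpr hi⟩
  set δ := Fs.inf' hFsne t with hδdef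
  have hδ0 : 0 < δ := by
    rw [hδdef, Finset.lt_inf'_iff]
    intro i hi
    exact ht i (hFS (hFfin.mem_toFinset.mp hi))
  refine ⟨δ, hδ0, ?_⟩
  intro q hqfr hqne hqnear
  have hfreq : frontier K = K \ interior K := hKclosed.frontier_eq
  have hqK : q ∈ K := by rw [hfreq] at hqfr; exact hqfr.1
  have hqni : q ∉ interior K := by rw [hfreq] at hqfr; exact hqfr.2
  set m := ‖q - Nv‖ with hmdef
  have hm0 : 0 < m := by
    rw [hmdef, norm_pos_iff]
    exact sub_ne_zero.mpr hqne
  set w := m⁻¹ • (q - Nv) with hwdef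
  have hwn : ‖w‖ = 1 := by
    rw [hwdef, norm_smul, Real.norm_eq_abs, abs_of_pos (by positivity), ← hmdef,
      inv_mul_cancel₀ hm0.ne']
  have hq_eq : q = Nv + m • w := by
    rw [hwdef, smul_smul, mul_inv_cancel₀ hm0.ne', one_smul]
    abel
  by_cases hwS : w ∈ S
  · exfalso
    obtain ⟨i, hiF, hqi⟩ := Set.mem_iUnion₂.mp (hFcov hwS)
    have hiS : i ∈ S := hFS hiF
    have hti : 0 < t i := ht i hiS
    have h1 : Nv + (t i) • w ∈ interior K := by
      apply hball i hiS
      rw [Metric.mem_ball, dist_eq_norm]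
      have : (Nv + t i • w) - (Nv + t i • i) = t i • (w - i) := by module
      rw [this, norm_smul, Real.norm_eq_abs, abs_of_pos hti]
      have hd : ‖w - i‖ < ρ i / t i := by
        rw [← dist_eq_norm]; exact hqi
      calc t i * ‖w - i‖ < t i * (ρ i / t i) := by
            exact mul_lt_mul_of_pos_left hd hti
        _ = ρ i := by field_simp
    have hmlt : m < t i := by
      refine lt_of_lt_of_le hqnear ?_
      exact Finset.inf'_le _ (hFfin.mem_toFinset.mpr hiF)
    have hcombo : (1 - m / t i) • Nv + (m / t i) • (Nv + (t i) • w) = Nv + m • w := by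
      have h2 : (1 - m / t i) • Nv + (m / t i) • (Nv + (t i) • w)
          = Nv + ((m / t i) * t i) • w := by module
      rw [h2, div_mul_cancel₀ _ hti.ne']
    have : q ∈ interior K := by
      rw [hq_eq, ← hcombo]
      exact hKconv.combo_self_interior_mem_interior hNK h1
        (by rw [sub_nonneg, div_le_one hti]; exact hmlt.le)
        (div_pos hm0 hti) (by ring)
    exact hqni this
  · have hw2 : -c < w 2 := by
      by_contra hle
      push_neg at hle
      exact hwS ⟨hwn, hle⟩
    have hw2eq : w 2 = m⁻¹ * (q 2 - 1) := by
      rw [hwdef]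
      simp only [PiLp.smul_apply, PiLp.sub_apply, smul_eq_mul, Nv_two]
    have hA : 1 - q 2 < c * m := by
      rw [hw2eq] at hw2
      have h3 : m * (m⁻¹ * (q 2 - 1)) = q 2 - 1 := by field_simp
      have h4 : m * -c < q 2 - 1 := by
        have h5 := mul_lt_mul_of_pos_left hw2 hm0
        rwa [h3] at h5
      nlinarith [h4]
    set r := Real.sqrt ((q 0)^2 + (q 1)^2) with hrdef
    have hr0 : 0 ≤ r := Real.sqrt_nonneg _
    have hq2le : q 2 ≤ 1 := hKbelow q hqK
    have hmle : m ≤ r + (1 - q 2) := by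
      have hcoord : m = Real.sqrt ((q 0)^2 + (q 1)^2 + (q 2 - 1)^2) := by
        rw [hmdef, EuclideanSpace.norm_eq]
        congr 1
        rw [Fin.sum_univ_three]
        have h0 : (q - Nv) 0 = q 0 := by simp [Nv, EuclideanSpace.single_apply]
        have h1 : (q - Nv) 1 = q 1 := by simp [Nv, EuclideanSpace.single_apply]
        have h2 : (q - Nv) 2 = q 2 - 1 := by simp [Nv_two]
        rw [h0, h1, h2]
        simp [Real.norm_eq_abs, sq_abs]
      rw [hcoord]
      have hsq : (q 0)^2 + (q 1)^2 + (q 2 - 1)^2 ≤ (r + (1 - q 2))^2 := by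
        have hrr : r^2 = (q 0)^2 + (q 1)^2 := Real.sq_sqrt (by positivity)
        nlinarith [mul_nonneg hr0 (by linarith : (0:ℝ) ≤ 1 - q 2)]
      calc Real.sqrt ((q 0)^2 + (q 1)^2 + (q 2 - 1)^2)
          ≤ Real.sqrt ((r + (1 - q 2))^2) := Real.sqrt_le_sqrt hsq
        _ = r + (1 - q 2) := Real.sqrt_sq (by linarith)
    nlinarith [hA, hmle, hc0, hr0, hcε, hε]

lemma coord_extract (a b t : ℝ) (ht : t ≠ 0) (z : ℂ)
    (hz : z = ((a:ℂ) + (b:ℂ)*Complex.I) / ((t:ℝ):ℂ)) : a = z.re * t ∧ b = z.im * t := by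
  have htC : ((t:ℝ):ℂ) ≠ 0 := by exact_mod_cast ht
  have h1 : z * ((t:ℝ):ℂ) = (a:ℂ) + (b:ℂ)*Complex.I := by
    rw [hz, div_mul_cancel₀ _ htC]
  obtain ⟨h2, h3⟩ := Complex.ext_iff.mp h1
  simp [Complex.mul_re, Complex.mul_im] at h2 h3
  constructor <;> linarith

/-- Stereographic projection of the boundary of a smooth strictly
convex body `K ⊆ ℝ³` from its north pole `N = (0,0,1)` is a homeomorphism onto the
one-point compactification of `ℂ`. -/
theorem stereographic_projection_isHomeomorph
    (K : Set (EuclideanSpace ℝ (Fin 3)))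
    (hKcomp : IsCompact K) (hKconv : Convex ℝ K)
    (hKint : (interior K).Nonempty) (hKstrict : StrictConvex ℝ K)
    (hsmooth : ∀ p ∈ frontier K,
      ∃! u : EuclideanSpace ℝ (Fin 3), ‖u‖ = 1 ∧ ∀ y ∈ K, ⟪y - p, u⟫ ≤ 0)
    (hKbelow : ∀ x ∈ K, x 2 ≤ (1 : ℝ))
    (hN : K ∩ {x : EuclideanSpace ℝ (Fin 3) | x 2 = 1} =
      {EuclideanSpace.single (2 : Fin 3) (1 : ℝ)})
    (h : frontier K → OnePoint ℂ)
    (h_infty : ∀ p : frontier K,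
      (p : EuclideanSpace ℝ (Fin 3)) = EuclideanSpace.single (2 : Fin 3) (1 : ℝ) →
      h p = OnePoint.infty)
    (h_fin : ∀ p : frontier K,
      (p : EuclideanSpace ℝ (Fin 3)) ≠ EuclideanSpace.single (2 : Fin 3) (1 : ℝ) →
      h p = ((((p : EuclideanSpace ℝ (Fin 3)) 0 : ℂ) +
        ((p : EuclideanSpace ℝ (Fin 3)) 1 : ℂ) * Complex.I) /
        ((1 : ℂ) - ((p : EuclideanSpace ℝ (Fin 3)) 2 : ℂ)) : ℂ)) :
    IsHomeomorph h := by
  have hKclosed : IsClosed K := hKcomp.isClosed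
  have hfreq : frontier K = K \ interior K := hKclosed.frontier_eq
  have hfrK : frontier K ⊆ K := by rw [hfreq]; exact Set.diff_subset
  have hN' : K ∩ {x : E3 | x 2 = 1} = {Nv} := hN
  have hNvK : Nv ∈ K := by
    have : Nv ∈ ({Nv} : Set E3) := rfl
    rw [← hN'] at this
    exact this.1
  have hNfr : Nv ∈ frontier K := by
    rw [hfreq]
    exact ⟨hNvK, not_mem_interior K hKbelow⟩
  have hnormN : ‖(Nv : E3)‖ = 1 ∧ ∀ y ∈ K, ⟪y - Nv, Nv⟫ ≤ 0 := by
    constructor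
    · simp [Nv, EuclideanSpace.norm_single]
    · intro y hy
      have hcalc : ⟪y - Nv, Nv⟫ = (y - Nv) 2 := by
        rw [real_inner_comm]
        simp [Nv, EuclideanSpace.inner_single_left]
      rw [hcalc]
      have h1 := hKbelow y hy
      have h2 : (y - Nv) 2 = y 2 - 1 := by simp [Nv_two]
      rw [h2]; linarith
  have huniq : ∀ u : E3, ‖u‖ = 1 → (∀ y ∈ K, ⟪y - Nv, u⟫ ≤ 0) → u = Nv := by
    intro u h1 h2
    exact (hsmooth Nv hNfr).unique ⟨h1, h2⟩ hnormN
  have hlt1 : ∀ q ∈ frontier K, q ≠ Nv → q 2 < 1 := by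
    intro q hq hqne
    rcases lt_or_eq_of_le (hKbelow q (hfrK hq)) with hlt | heq
    · exact hlt
    · exfalso
      have : q ∈ K ∩ {x : E3 | x 2 = 1} := ⟨hfrK hq, heq⟩
      rw [hN'] at this
      exact hqne this
  -- the strict convexity helper
  have hseg : ∀ (x y : E3), x ∈ frontier K → y ∈ K → y ≠ Nv →
      ∀ (s u : ℝ) (wv : E3), 0 < s → s < u → x = Nv + s • wv → y = Nv + u • wv → False := by
    intro x y hx hyK hyne s u wv hs hsu hxe hye
    have hu0 : 0 < u := lt_trans hs hsu
    have hcombo : (1 - s/u) • Nv + (s/u) • y = x := by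
      rw [hye, hxe]
      have hm : (1 - s/u) • Nv + (s/u) • (Nv + u • wv) = Nv + ((s/u)*u) • wv := by module
      rw [hm, div_mul_cancel₀ _ hu0.ne']
    have hxint : x ∈ interior K := by
      rw [← hcombo]
      refine hKstrict hNvK hyK (Ne.symm hyne) ?_ ?_ (by ring)
      · rw [sub_pos, div_lt_one hu0]; exact hsu
      · exact div_pos hs hu0
    rw [hfreq] at hx
    exact hx.2 hxint
  -- vector associated to a complex number
  let wv : ℂ → E3 := fun z => (WithLp.equiv 2 (Fin 3 → ℝ)).symm ![z.re, z.im, -1]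
  have hwv0 : ∀ z, wv z 0 = z.re := fun z => by simp [wv, WithLp.equiv_symm_apply, PiLp.toLp_apply]
  have hwv1 : ∀ z, wv z 1 = z.im := fun z => by simp [wv, WithLp.equiv_symm_apply, PiLp.toLp_apply]
  have hwv2 : ∀ z, wv z 2 = -1 := fun z => by simp [wv, WithLp.equiv_symm_apply, PiLp.toLp_apply]
  -- coordinates of a frontier point from its h-value
  have hcoords : ∀ p : frontier K, (p : E3) ≠ Nv → ∀ z : ℂ,
      h p = (z : OnePoint ℂ) → (p : E3) = Nv + (1 - (p : E3) 2) • wv z := by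
    intro p hp z hz
    have hp2 : (p : E3) 2 < 1 := hlt1 _ p.2 hp
    have ht0 : (0:ℝ) < 1 - (p : E3) 2 := by linarith
    have hformula := h_fin p hp
    rw [hformula] at hz
    have hzc : (((((p : E3) 0 : ℂ) + ((p : E3) 1 : ℂ) * Complex.I) /
        ((1 : ℂ) - ((p : E3) 2 : ℂ))) : ℂ) = z := OnePoint.coe_eq_coe.mp hz
    have hden : ((1 : ℂ) - ((p : E3) 2 : ℂ)) = (((1 - (p : E3) 2 : ℝ)) : ℂ) := by push_cast; ring
    rw [hden] at hzc
    obtain ⟨h0, h1⟩ := coord_extract ((p:E3) 0) ((p:E3) 1) (1 - (p:E3) 2) ht0.ne' z hzc.symm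
    apply E3_ext
    · simp only [PiLp.add_apply, PiLp.smul_apply, smul_eq_mul, hwv0, Nv_zero]
      linarith [h0]
    · simp only [PiLp.add_apply, PiLp.smul_apply, smul_eq_mul, hwv1, Nv_one]
      linarith [h1]
    · simp only [PiLp.add_apply, PiLp.smul_apply, smul_eq_mul, hwv2, Nv_two]
      ring
  -- injectivity
  have hinj : Function.Injective h := by
    intro p q hpq
    by_cases hp : (p : E3) = Nv <;> by_cases hq : (q : E3) = Nv
    · exact Subtype.ext (hp.trans hq.symm)
    · exfalso
      rw [h_infty p hp, h_fin q hq] at hpq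
      exact OnePoint.coe_ne_infty _ hpq.symm
    · exfalso
      rw [h_fin p hp, h_infty q hq] at hpq
      exact OnePoint.coe_ne_infty _ hpq
    · set z : ℂ := ((((p : E3) 0 : ℂ) + ((p : E3) 1 : ℂ) * Complex.I) /
        ((1 : ℂ) - ((p : E3) 2 : ℂ))) with hzdef
      have hzp : h p = (z : OnePoint ℂ) := h_fin p hp
      have hzq : h q = (z : OnePoint ℂ) := by rw [← hpq]; exact hzp
      have hpe := hcoords p hp z hzp
      have hqe := hcoords q hq z hzq
      have hp2 : (p : E3) 2 < 1 := hlt1 _ p.2 hp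
      have hq2 : (q : E3) 2 < 1 := hlt1 _ q.2 hq
      set tp := 1 - (p : E3) 2 with htpdef
      set tq := 1 - (q : E3) 2 with htqdef
      have htp0 : 0 < tp := by rw [htpdef]; linarith
      have htq0 : 0 < tq := by rw [htqdef]; linarith
      rcases lt_trichotomy tp tq with hlt | heq | hgt
      · exact absurd (hseg (p : E3) (q : E3) p.2 (hfrK q.2) hq tp tq (wv z)
          htp0 hlt hpe hqe) (by simp)
      · apply Subtype.ext
        rw [hpe, hqe, heq]
      · exact absurd (hseg (q : E3) (p : E3) q.2 (hfrK p.2) hp tq tp (wv z)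
          htq0 hgt hqe hpe) (by simp)
  -- surjectivity
  have hsurj : Function.Surjective h := by
    intro o
    induction o using OnePoint.rec with
    | infty => exact ⟨⟨Nv, hNfr⟩, h_infty _ rfl⟩
    | coe z =>
      have hv2 : wv z 2 < 0 := by rw [hwv2]; norm_num
      obtain ⟨t₀, ht₀, hmem⟩ := ray_enters K hKconv hKint hKbelow hNvK huniq (wv z) hv2
      set A : Set ℝ := {t : ℝ | Nv + t • wv z ∈ K} with hAdef
      have hAt₀ : t₀ ∈ A := by
        simp only [hAdef, Set.mem_setOf_eq]
        exact interior_subset hmem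
      have hAcl : IsClosed A := by
        have hcont : Continuous (fun t : ℝ => Nv + t • wv z) :=
          continuous_const.add (continuous_id.smul continuous_const)
        exact hKclosed.preimage hcont
      have hwvne : wv z ≠ 0 := by
        intro h0
        have := hwv2 z
        rw [h0] at this
        norm_num at this
      have hwvpos : 0 < ‖wv z‖ := norm_pos_iff.mpr hwvne
      have hAbdd : BddAbove A := by
        obtain ⟨M, hM⟩ := hKcomp.isBounded.subset_closedBall 0
        refine ⟨(M + ‖(Nv : E3)‖) / ‖wv z‖, ?_⟩
        intro t htA
        have h1 : ‖Nv + t • wv z‖ ≤ M := by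
          have := hM htA
          rwa [Metric.mem_closedBall, dist_zero_right] at this
        have h2 : ‖t • wv z‖ ≤ M + ‖(Nv : E3)‖ := by
          calc ‖t • wv z‖ = ‖(Nv + t • wv z) - Nv‖ := by congr 1; abel
            _ ≤ ‖Nv + t • wv z‖ + ‖(Nv : E3)‖ := norm_sub_le _ _
            _ ≤ M + ‖(Nv : E3)‖ := by linarith
        rw [norm_smul, Real.norm_eq_abs] at h2
        rw [le_div_iff₀ hwvpos]
        calc t * ‖wv z‖ ≤ |t| * ‖wv z‖ :=
              mul_le_mul_of_nonneg_right (le_abs_self t) hwvpos.le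
          _ ≤ M + ‖(Nv : E3)‖ := h2
      set T := sSup A with hTdef
      have hTA : T ∈ A := hAcl.csSup_mem ⟨t₀, hAt₀⟩ hAbdd
      have hT0 : 0 < T := lt_of_lt_of_le ht₀ (le_csSup hAbdd hAt₀)
      set pv : E3 := Nv + T • wv z with hpvdef
      have hpvK : pv ∈ K := by
        have := hTA
        simp only [hAdef, Set.mem_setOf_eq] at this
        exact this
      have hpvni : pv ∉ interior K := by
        intro hint
        obtain ⟨ρ, hρ, hball⟩ := Metric.isOpen_iff.mp isOpen_interior _ hint
        set t' := T + ρ / (2 * ‖wv z‖) with ht'def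
        have ht'A : t' ∈ A := by
          have : Nv + t' • wv z ∈ Metric.ball pv ρ := by
            rw [mem_ball_iff_norm]
            have heq2 : (Nv + t' • wv z) - pv = (ρ / (2 * ‖wv z‖)) • wv z := by
              rw [hpvdef, ht'def]
              module
            rw [heq2, norm_smul, Real.norm_eq_abs,
              abs_of_pos (by positivity : (0:ℝ) < ρ / (2 * ‖wv z‖))]
            rw [div_mul_eq_mul_div, mul_comm]
            rw [div_lt_iff₀ (by positivity : (0:ℝ) < 2 * ‖wv z‖)]
            nlinarith [hwvpos]
          simp only [hAdef, Set.mem_setOf_eq]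
          exact interior_subset (hball this)
        have : t' ≤ T := le_csSup hAbdd ht'A
        have ht'gt : T < t' := by
          rw [ht'def]
          have : 0 < ρ / (2 * ‖wv z‖) := by positivity
          linarith
        linarith
      have hpvfr : pv ∈ frontier K := by rw [hfreq]; exact ⟨hpvK, hpvni⟩
      have hpv2 : pv 2 = 1 - T := by
        rw [hpvdef]
        simp only [PiLp.add_apply, PiLp.smul_apply, smul_eq_mul, hwv2, Nv_two]
        ring
      have hpvne : pv ≠ Nv := by
        intro heq2
        have := congrArg (fun x : E3 => x 2) heq2
        simp only [hpv2, Nv_two] at this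
        linarith
      refine ⟨⟨pv, hpvfr⟩, ?_⟩
      rw [h_fin ⟨pv, hpvfr⟩ hpvne]
      rw [OnePoint.coe_eq_coe]
      have hpv0 : pv 0 = T * z.re := by
        rw [hpvdef]
        simp only [PiLp.add_apply, PiLp.smul_apply, smul_eq_mul, hwv0, Nv_zero]
        ring
      have hpv1 : pv 1 = T * z.im := by
        rw [hpvdef]
        simp only [PiLp.add_apply, PiLp.smul_apply, smul_eq_mul, hwv1, Nv_one]
        ring
      show ((pv 0 : ℂ) + (pv 1 : ℂ) * Complex.I) / ((1 : ℂ) - (pv 2 : ℂ)) = z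
      rw [hpv0, hpv1, hpv2]
      have hTz : ((T:ℝ):ℂ) ≠ 0 := by exact_mod_cast hT0.ne'
      push_cast
      rw [show (T:ℂ) * z.re + T * z.im * Complex.I = T * (z.re + z.im * Complex.I) by ring]
      rw [Complex.re_add_im]
      rw [show (1:ℂ) - (1 - (T:ℂ)) = (T:ℂ) by ring]
      rw [mul_comm, mul_div_assoc, div_self hTz, mul_one]
  -- continuity
  have hproj : ∀ i : Fin 3, Continuous (fun q : frontier K => ((q : E3) i : ℝ)) := by
    intro i
    exact (EuclideanSpace.proj (i : Fin 3) : E3 →L[ℝ] ℝ).continuous.comp continuous_subtype_val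
  have hcont : Continuous h := by
    rw [continuous_iff_continuousAt]
    intro p
    by_cases hp : (p : E3) = Nv
    · -- continuity at the north pole
      have hpinf : h p = OnePoint.infty := h_infty p hp
      unfold ContinuousAt
      rw [hpinf, ← nhdsNE_sup_pure p, Filter.tendsto_sup]
      constructor
      · have hev : ∀ᶠ q : frontier K in nhdsWithin p {p}ᶜ,
            ((((((q : E3) 0 : ℂ) + ((q : E3) 1 : ℂ) * Complex.I) /
              ((1 : ℂ) - ((q : E3) 2 : ℂ))) : ℂ) : OnePoint ℂ) = h q := by
          filter_upwards [self_mem_nhdsWithin] with q hq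
          refine (h_fin q ?_).symm
          intro hqv
          exact hq (Subtype.ext (hqv.trans hp.symm))
        refine Filter.Tendsto.congr' hev ?_
        have hkey : Filter.Tendsto (fun q : frontier K =>
            ((((q : E3) 0 : ℂ) + ((q : E3) 1 : ℂ) * Complex.I) /
              ((1 : ℂ) - ((q : E3) 2 : ℂ)))) (nhdsWithin p {p}ᶜ) (Filter.cocompact ℂ) := by
          rw [← Metric.cobounded_eq_cocompact, ← tendsto_norm_atTop_iff_cobounded]
          rw [Filter.tendsto_atTop]
          intro M
          set M' := max M 1 with hM'def
          have hM'pos : 0 < M' := lt_of_lt_of_le one_pos (le_max_right M 1)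
          obtain ⟨δ, hδ0, hflat⟩ := flat_near K hKconv hKclosed hKint hKbelow hNvK huniq
            (1 / M') (by positivity)
          have hball : {q : frontier K | dist q p < δ} ∈ nhdsWithin p {p}ᶜ :=
            nhdsWithin_le_nhds (Metric.ball_mem_nhds p hδ0)
          filter_upwards [hball, self_mem_nhdsWithin] with q hqd hqne
          have hqv : (q : E3) ≠ Nv := by
            intro hqq
            exact hqne (Subtype.ext (hqq.trans hp.symm))
          have hqnear : ‖(q : E3) - Nv‖ < δ := by
            rw [← dist_eq_norm]
            calc dist (q : E3) Nv = dist (q : E3) (p : E3) := by rw [hp]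
              _ = dist q p := (Subtype.dist_eq q p).symm
              _ < δ := hqd
          have hflatq := hflat (q : E3) q.2 hqv hqnear
          have hq2 : (q : E3) 2 < 1 := hlt1 _ q.2 hqv
          set r := Real.sqrt (((q : E3) 0)^2 + ((q : E3) 1)^2) with hrdef
          have hrpos : 0 < r := by
            rcases le_or_gt r 0 with hr | hr
            · exfalso
              have : 1 - (q : E3) 2 ≤ 0 := le_trans hflatq
                (mul_nonpos_of_nonneg_of_nonpos (by positivity) hr)
              linarith
            · exact hr
          have hnorm : ‖((((q : E3) 0 : ℂ) + ((q : E3) 1 : ℂ) * Complex.I) /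
              ((1 : ℂ) - ((q : E3) 2 : ℂ)))‖ = r / (1 - (q : E3) 2) := by
            rw [norm_div]
            congr 1
            · rw [Complex.norm_add_mul_I]
            · rw [show ((1 : ℂ) - ((q : E3) 2 : ℂ)) = (((1 - (q : E3) 2 : ℝ)) : ℂ) by
                push_cast; ring]
              rw [Complex.norm_real, Real.norm_eq_abs, abs_of_pos (by linarith)]
          rw [hnorm]
          have hstep : M' ≤ r / (1 - (q : E3) 2) := by
            rw [le_div_iff₀ (by linarith : (0:ℝ) < 1 - (q : E3) 2)]
            have := hflatq
            calc M' * (1 - (q : E3) 2) ≤ M' * ((1 / M') * r) := by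
                  apply mul_le_mul_of_nonneg_left _ hM'pos.le
                  linarith [this]
              _ = r := by field_simp
          calc M ≤ M' := le_max_left M 1
            _ ≤ r / (1 - (q : E3) 2) := hstep
        have hcoe := OnePoint.tendsto_coe_infty (X := ℂ)
        rw [Filter.coclosedCompact_eq_cocompact] at hcoe
        exact hcoe.comp hkey
      · have := tendsto_pure_nhds h p
        rwa [hpinf] at this
    · -- continuity away from the north pole
      have hp2 : (p : E3) 2 < 1 := hlt1 _ p.2 hp
      have hopen : IsOpen {q : frontier K | (q : E3) ≠ Nv} :=
        (isOpen_compl_singleton (x := Nv)).preimage continuous_subtype_val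
      have hev : ∀ᶠ q : frontier K in nhds p,
          ((((((q : E3) 0 : ℂ) + ((q : E3) 1 : ℂ) * Complex.I) /
            ((1 : ℂ) - ((q : E3) 2 : ℂ))) : ℂ) : OnePoint ℂ) = h q := by
        filter_upwards [hopen.mem_nhds hp] with q hq
        exact (h_fin q hq).symm
      refine ContinuousAt.congr ?_ hev
      apply OnePoint.continuous_coe.continuousAt.comp
      apply ContinuousAt.div
      · exact ((Complex.continuous_ofReal.comp (hproj 0)).add
          ((Complex.continuous_ofReal.comp (hproj 1)).mul continuous_const)).continuousAt
      · exact (continuous_const.sub (Complex.continuous_ofReal.comp (hproj 2))).continuousAt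
      · intro hzero
        rw [sub_eq_zero] at hzero
        have : ((p : E3) 2 : ℝ) = 1 := by exact_mod_cast hzero.symm
        linarith
  -- conclusion
  have hfrcomp : IsCompact (frontier K) :=
    hKcomp.of_isClosed_subset isClosed_frontier hfrK
  haveI : CompactSpace (frontier K) := isCompact_iff_compactSpace.mp hfrcomp
  let e : frontier K ≃ OnePoint ℂ := Equiv.ofBijective h ⟨hinj, hsurj⟩
  have hce : Continuous e := hcont
  exact (Continuous.homeoOfEquivCompactToT2 (f := e) hce).isHomeomorph
end

section
/- Let K ⊆ ℝ³ be a compact convex set with nonempty interior which is strictly convex, let u ∈ ℝ³ be nonzero and c ∈ ℝ, and suppose the hyperplane {y ∈ ℝ³ : ⟪y, u⟫ = c} meets the interior of K. Let D = {y ∈ frontier K : ⟪y, u⟫ ≥ c}. Then, with respect to the subspace topology on frontier K, the interior of D equals {y ∈ frontier K : ⟪y, u⟫ > c} and the frontier of D equals {y ∈ frontier K : ⟪y, u⟫ = c}. -/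
open scoped RealInnerProductSpace

open Set Filter Topology

set_option maxHeartbeats 1000000

/-- Key lemma: any boundary point of `K` lying on the plane `⟪·,u⟫ = c` is a limit of
boundary points with `⟪·,u⟫ < c`, provided the plane meets the interior of `K`. -/
lemma mem_closure_frontier_lt
    (K : Set (EuclideanSpace ℝ (Fin 3))) (hKconv : Convex ℝ K)
    (u : EuclideanSpace ℝ (Fin 3)) (hu : u ≠ 0) (c : ℝ)
    (x₀ : EuclideanSpace ℝ (Fin 3)) (hx₀c : ⟪x₀, u⟫ = c) (hx₀ : x₀ ∈ interior K)
    (y : EuclideanSpace ℝ (Fin 3)) (hy : y ∈ frontier K) (hyc : ⟪y, u⟫ = c) :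
    y ∈ closure {z | z ∈ frontier K ∧ ⟪z, u⟫ < c} := by
  set K₀ : Set (EuclideanSpace ℝ (Fin 3)) := (fun z => z + x₀) ⁻¹' K with hK₀def
  have hK₀conv : Convex ℝ K₀ := hKconv.translate_preimage_left x₀
  have hK₀nhds : K₀ ∈ 𝓝 (0 : EuclideanSpace ℝ (Fin 3)) := by
    have hopen : IsOpen ((fun z : EuclideanSpace ℝ (Fin 3) => z + x₀) ⁻¹' interior K) :=
      isOpen_interior.preimage (by continuity)
    refine Filter.mem_of_superset (hopen.mem_nhds ?_) (Set.preimage_mono interior_subset)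
    simpa using hx₀
  have hfront : ∀ z : EuclideanSpace ℝ (Fin 3), z ∈ frontier K₀ ↔ z + x₀ ∈ frontier K := by
    intro z
    have h := (Homeomorph.addRight x₀).preimage_frontier K
    have : z ∈ frontier ((Homeomorph.addRight x₀) ⁻¹' K) ↔ z + x₀ ∈ frontier K := by
      rw [← h]; rfl
    exact this
  set g : EuclideanSpace ℝ (Fin 3) → ℝ := fun z => gauge K₀ (z - x₀) with hgdef
  have hgcont : Continuous g :=
    (continuous_gauge hK₀conv hK₀nhds).comp (continuous_id.sub continuous_const)
  have hg_one : ∀ z ∈ frontier K, g z = 1 := by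
    intro z hz
    rw [hgdef]
    rw [gauge_eq_one_iff_mem_frontier hK₀conv hK₀nhds, hfront, sub_add_cancel]
    exact hz
  -- the auxiliary point below the plane
  set w : EuclideanSpace ℝ (Fin 3) := x₀ - u with hwdef
  have hwc : ⟪w, u⟫ = c - ‖u‖ ^ 2 := by
    rw [hwdef, inner_sub_left, hx₀c, real_inner_self_eq_norm_sq]
  have hwlt : ⟪w, u⟫ < c := by
    rw [hwc]
    have : (0:ℝ) < ‖u‖ ^ 2 := pow_pos (norm_pos_iff.2 hu) 2
    linarith
  -- the path
  set p : ℝ → EuclideanSpace ℝ (Fin 3) := fun s => w + s • (y - w) with hpdef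
  have hp1 : p 1 = y := by simp [hpdef]
  have hpcont : Continuous p := continuous_const.add (continuous_id.smul continuous_const)
  have hpc : ∀ s, ⟪p s, u⟫ = ⟪w, u⟫ + s * (c - ⟪w, u⟫) := by
    intro s
    rw [hpdef]
    simp only [inner_add_left, real_inner_smul_left, inner_sub_left, hyc]
  have hplt : ∀ s : ℝ, s < 1 → ⟪p s, u⟫ < c := by
    intro s hs
    rw [hpc]
    nlinarith
  set f : ℝ → EuclideanSpace ℝ (Fin 3) := fun s => x₀ + (g (p s))⁻¹ • (p s - x₀) with hfdef
  have hgp1 : g (p 1) = 1 := by rw [hp1]; exact hg_one y hy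
  have hf1 : f 1 = y := by
    have hgy : g y = 1 := hg_one y hy
    rw [hfdef]
    simp only [hp1, hgy, inv_one, one_smul]
    abel
  have hgpcont : Continuous fun s => g (p s) := hgcont.comp hpcont
  have hfc : ContinuousAt f 1 := by
    apply ContinuousAt.add continuousAt_const
    apply ContinuousAt.fun_smul
    · exact hgpcont.continuousAt.inv₀ (show g (p 1) ≠ 0 by rw [hgp1]; exact one_ne_zero)
    · exact ((hpcont.sub continuous_const).continuousAt)
  have htend : Tendsto f (𝓝[<] (1:ℝ)) (𝓝 y) := by
    rw [← hf1]
    exact hfc.tendsto.mono_left nhdsWithin_le_nhds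
  have hev : ∀ᶠ s in 𝓝[<] (1:ℝ), 0 < g (p s) := by
    have h1 : Tendsto (fun s => g (p s)) (𝓝 (1:ℝ)) (𝓝 1) := by
      have := hgpcont.continuousAt (x := (1:ℝ))
      rwa [ContinuousAt, hgp1] at this
    exact (h1.eventually (eventually_gt_nhds one_pos)).filter_mono nhdsWithin_le_nhds
  refine mem_closure_of_tendsto htend ?_
  filter_upwards [hev, self_mem_nhdsWithin] with s hgs (hs1 : s ∈ Iio 1)
  have hfsub : f s - x₀ = (g (p s))⁻¹ • (p s - x₀) := by
    simp only [hfdef]; exact add_sub_cancel_left _ _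
  constructor
  · have h1 : gauge K₀ (f s - x₀) = 1 := by
      rw [hfsub, gauge_smul_of_nonneg (inv_nonneg.2 hgs.le), smul_eq_mul,
        inv_mul_cancel₀ hgs.ne']
    have h2 : f s - x₀ ∈ frontier K₀ := (gauge_eq_one_iff_mem_frontier hK₀conv hK₀nhds).1 h1
    have h3 := (hfront _).1 h2
    rwa [sub_add_cancel] at h3
  · have hfs : ⟪f s, u⟫ = c + (g (p s))⁻¹ * (⟪p s, u⟫ - c) := by
      rw [hfdef]
      simp only [inner_add_left, real_inner_smul_left, inner_sub_left, hx₀c]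
      try ring
    have h1 : ⟪p s, u⟫ < c := hplt s hs1
    have h2 : (0:ℝ) < (g (p s))⁻¹ := inv_pos.2 hgs
    rw [hfs]
    nlinarith

/-- For a strictly convex body `K ⊆ ℝ³` and a closed half-space
whose bounding plane meets the interior of `K`, the `K`-disk
`D = {y ∈ frontier K | ⟪y, u⟫ ≥ c}` has, relative to the subspace topology of
`frontier K`, interior `{y | ⟪y, u⟫ > c}` and frontier `{y | ⟪y, u⟫ = c}`. -/
theorem kDisk_interior_frontier
    (K : Set (EuclideanSpace ℝ (Fin 3)))
    (hKcomp : IsCompact K) (hKconv : Convex ℝ K)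
    (hKint : (interior K).Nonempty) (hKstrict : StrictConvex ℝ K)
    (u : EuclideanSpace ℝ (Fin 3)) (hu : u ≠ 0) (c : ℝ)
    (hmeet : ({y : EuclideanSpace ℝ (Fin 3) | ⟪y, u⟫ = c} ∩ interior K).Nonempty) :
    interior {y : frontier K | c ≤ ⟪(y : EuclideanSpace ℝ (Fin 3)), u⟫} =
      {y : frontier K | c < ⟪(y : EuclideanSpace ℝ (Fin 3)), u⟫} ∧
    frontier {y : frontier K | c ≤ ⟪(y : EuclideanSpace ℝ (Fin 3)), u⟫} =
      {y : frontier K | ⟪(y : EuclideanSpace ℝ (Fin 3)), u⟫ = c} := by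
  obtain ⟨x₀, hx₀c, hx₀⟩ := hmeet
  have hφ : Continuous fun y : frontier K => ⟪(y : EuclideanSpace ℝ (Fin 3)), u⟫ :=
    Continuous.inner continuous_subtype_val continuous_const
  have hopen : IsOpen {y : frontier K | c < ⟪(y : EuclideanSpace ℝ (Fin 3)), u⟫} :=
    isOpen_Ioi.preimage hφ
  have hclosed : IsClosed {y : frontier K | c ≤ ⟪(y : EuclideanSpace ℝ (Fin 3)), u⟫} :=
    isClosed_Ici.preimage hφ
  have himage : (fun y : frontier K => (y : EuclideanSpace ℝ (Fin 3))) ''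
      {y : frontier K | ⟪(y : EuclideanSpace ℝ (Fin 3)), u⟫ < c}
      = {z | z ∈ frontier K ∧ ⟪z, u⟫ < c} := by
    ext z
    constructor
    · rintro ⟨⟨z', hz'⟩, h, rfl⟩
      exact ⟨hz', h⟩
    · rintro ⟨hz, h⟩
      exact ⟨⟨z, hz⟩, h, rfl⟩
  have hInt : interior {y : frontier K | c ≤ ⟪(y : EuclideanSpace ℝ (Fin 3)), u⟫} =
      {y : frontier K | c < ⟪(y : EuclideanSpace ℝ (Fin 3)), u⟫} := by
    apply subset_antisymm
    · intro y hy
      have hle : c ≤ ⟪(y : EuclideanSpace ℝ (Fin 3)), u⟫ :=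
        interior_subset (s := {y : frontier K | c ≤ ⟪(y : EuclideanSpace ℝ (Fin 3)), u⟫}) hy
      by_contra hlt
      have heq : ⟪(y : EuclideanSpace ℝ (Fin 3)), u⟫ = c := le_antisymm (not_lt.1 hlt) hle
      have hmem : (y : EuclideanSpace ℝ (Fin 3)) ∈
          closure {z | z ∈ frontier K ∧ ⟪z, u⟫ < c} :=
        mem_closure_frontier_lt K hKconv u hu c x₀ hx₀c hx₀ y y.2 heq
      have hcl : y ∈ closure {y : frontier K | ⟪(y : EuclideanSpace ℝ (Fin 3)), u⟫ < c} := by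
        rw [closure_subtype, himage]
        exact hmem
      have hsub : {y : frontier K | ⟪(y : EuclideanSpace ℝ (Fin 3)), u⟫ < c} ⊆
          {y : frontier K | c ≤ ⟪(y : EuclideanSpace ℝ (Fin 3)), u⟫}ᶜ :=
        fun z hz hz' => absurd (show c ≤ ⟪(z : EuclideanSpace ℝ (Fin 3)), u⟫ from hz')
          (not_le.2 (show ⟪(z : EuclideanSpace ℝ (Fin 3)), u⟫ < c from hz))
      have : y ∈ (interior {y : frontier K | c ≤ ⟪(y : EuclideanSpace ℝ (Fin 3)), u⟫})ᶜ := by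
        rw [← closure_compl]
        exact closure_mono hsub hcl
      exact this hy
    · exact interior_maximal
        (fun z hz => show c ≤ ⟪(z : EuclideanSpace ℝ (Fin 3)), u⟫ from le_of_lt hz) hopen
  refine ⟨hInt, ?_⟩
  rw [hclosed.frontier_eq, hInt]
  ext y
  simp only [Set.mem_diff, Set.mem_setOf_eq]
  constructor
  · rintro ⟨h1, h2⟩
    exact le_antisymm (not_lt.1 h2) h1
  · intro h
    exact ⟨h.ge, not_lt.2 h.le⟩
end
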